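/- arXiv:2306.10148 — 6 statements merged into one kernel-verified Lean document; each statement's English description precedes it below -/
import Mathlib

section
/- Let m_0, m_1, …, m_g be positive integers, let e_i = gcd(m_0, …, m_i) for 0 ≤ i ≤ g and N_i = e_{i-1}/e_i for 1 ≤ i ≤ g, and let S = ⟨m_0, …, m_g⟩ be the additive submonoid of the nonnegative integers generated by m_0, …, m_g. Assume that N_i·m_i ∈ ⟨m_0, …, m_{i-1}⟩ for all 1 ≤ i ≤ g and that N_i·m_i < m_{i+1} for all 1 ≤ i ≤ g−1. Then every element a ∈ S can be written in one and only one way as a = k_0·m_0 + k_1·m_1 + … + k_g·m_g with nonnegative integers k_i satisfying 0 ≤ k_i < N_i for all 1 ≤ i ≤ g. -/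
section URSaux

/-- positivity of the partial gcds -/
lemma urs_e_pos (m : ℕ → ℕ) (hm0 : 0 < m 0) (i : ℕ) :
    0 < (Finset.range (i + 1)).gcd m := by
  rcases Nat.eq_zero_or_pos ((Finset.range (i + 1)).gcd m) with h | h
  · exfalso
    rw [Finset.gcd_eq_zero_iff] at h
    have := h 0 (Finset.mem_range.mpr (Nat.succ_pos i))
    omega
  · exact h

lemma urs_e_succ (m : ℕ → ℕ) (i : ℕ) :
    (Finset.range (i + 2)).gcd m = Nat.gcd (m (i + 1)) ((Finset.range (i + 1)).gcd m) := by
  rw [Finset.range_add_one, Finset.gcd_insert]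
  rfl

lemma urs_e_dvd_succ (m : ℕ → ℕ) (i : ℕ) :
    (Finset.range (i + 2)).gcd m ∣ (Finset.range (i + 1)).gcd m := by
  rw [urs_e_succ]; exact Nat.gcd_dvd_right _ _

lemma urs_exists_rep (g : ℕ) (m : ℕ → ℕ) (hm0 : 0 < m 0)
    (e N : ℕ → ℕ) (he : ∀ i, e i = (Finset.range (i + 1)).gcd m)
    (hNpos : ∀ i, 1 ≤ i → 0 < N i)
    (hNmem : ∀ i, 1 ≤ i → i ≤ g → N i * m i ∈ AddSubmonoid.closure (m '' Set.Iio i)) :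
    ∀ i, i ≤ g → ∀ a ∈ AddSubmonoid.closure (m '' Set.Iic i),
      ∃ k : ℕ → ℕ, (∀ j, 1 ≤ j → j ≤ i → k j < N j) ∧
        a = ∑ j ∈ Finset.range (i + 1), k j * m j := by
  intro i
  induction i with
  | zero =>
    intro _ a ha
    have hs : m '' Set.Iic 0 = {m 0} := by
      ext x
      simp [Set.Iic, Nat.le_zero]
    rw [hs, AddSubmonoid.mem_closure_singleton] at ha
    obtain ⟨n, hn⟩ := ha
    refine ⟨fun j => if j = 0 then n else 0, by omega, ?_⟩
    simp [Finset.sum_range_one, ← hn, smul_eq_mul]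
  | succ i ih =>
    intro hig a ha
    have hIic : Set.Iic (i + 1) = Set.Iic i ∪ {i + 1} := by
      ext x; simp [Set.Iic]; omega
    have hIio : Set.Iio (i + 1) = Set.Iic i := by
      ext x; simp [Set.Iio, Set.Iic]
    rw [hIic, Set.image_union, Set.image_singleton, AddSubmonoid.closure_union,
      AddSubmonoid.mem_sup] at ha
    obtain ⟨b, hb, c, hc, hbc⟩ := ha
    rw [AddSubmonoid.mem_closure_singleton] at hc
    obtain ⟨n, hn⟩ := hc
    have hNpos1 : 0 < N (i + 1) := hNpos (i + 1) (Nat.le_add_left 1 i)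
    set q := n / N (i + 1) with hq
    set r := n % N (i + 1) with hr
    have hnqr : n = N (i + 1) * q + r := (Nat.div_add_mod n (N (i + 1))).symm
    have hmem : N (i + 1) * m (i + 1) ∈ AddSubmonoid.closure (m '' Set.Iic i) := by
      have := hNmem (i + 1) (Nat.le_add_left 1 i) hig
      rwa [hIio] at this
    have hb' : b + q * (N (i + 1) * m (i + 1)) ∈ AddSubmonoid.closure (m '' Set.Iic i) := by
      refine AddSubmonoid.add_mem _ hb ?_
      have := AddSubmonoid.nsmul_mem _ hmem q
      rwa [smul_eq_mul] at this
    obtain ⟨k', hk'b, hk's⟩ := ih (Nat.le_of_succ_le hig) _ hb'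
    refine ⟨Function.update k' (i + 1) r, ?_, ?_⟩
    · intro j h1 hj
      rcases Nat.lt_or_ge j (i + 1) with hlt | hge
      · rw [Function.update_of_ne (by omega)]
        exact hk'b j h1 (by omega)
      · have : j = i + 1 := by omega
        subst this
        rw [Function.update_self]
        exact Nat.mod_lt _ hNpos1
    · have hsum : ∑ j ∈ Finset.range (i + 2), Function.update k' (i + 1) r j * m j
          = (∑ j ∈ Finset.range (i + 1), k' j * m j) + r * m (i + 1) := by
        rw [Finset.sum_range_succ, Function.update_self]
        congr 1
        apply Finset.sum_congr rfl
        intro j hj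
        rw [Finset.mem_range] at hj
        rw [Function.update_of_ne (by omega)]
      rw [hsum, ← hk's, ← hbc, ← hn, smul_eq_mul, hnqr]
      ring

lemma urs_uniq_rep (m e N : ℕ → ℕ) (hm0 : 0 < m 0)
    (he : ∀ i, e i = (Finset.range (i + 1)).gcd m)
    (hN : ∀ i, 1 ≤ i → N i = e (i - 1) / e i) :
    ∀ i, ∀ k k' : ℕ → ℕ,
      (∀ j, 1 ≤ j → j ≤ i → k j < N j) → (∀ j, 1 ≤ j → j ≤ i → k' j < N j) →
      (∑ j ∈ Finset.range (i + 1), k j * m j) = (∑ j ∈ Finset.range (i + 1), k' j * m j) →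
      ∀ j ≤ i, k j = k' j := by
  intro i
  induction i with
  | zero =>
    intro k k' _ _ hsum j hj
    have hj0 : j = 0 := Nat.le_zero.mp hj
    subst hj0
    simp only [Finset.sum_range_succ, Finset.sum_range_zero, Nat.zero_add] at hsum
    exact Nat.eq_of_mul_eq_mul_right hm0 hsum
  | succ i ih =>
    intro k k' hk hk' hsum j hj
    have hE : 0 < e (i + 1) := by rw [he]; exact urs_e_pos m hm0 _
    have hepos : 0 < e i := by rw [he]; exact urs_e_pos m hm0 _
    have hed : e (i + 1) ∣ e i := by rw [he, he]; exact urs_e_dvd_succ m i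
    have heN : N (i + 1) * e (i + 1) = e i := by
      rw [hN (i + 1) (Nat.le_add_left 1 i)]
      simpa using Nat.div_mul_cancel hed
    have hem : e (i + 1) ∣ m (i + 1) := by
      rw [he, urs_e_succ]
      exact Nat.gcd_dvd_left _ _
    set t := m (i + 1) / e (i + 1) with ht
    have htm : t * e (i + 1) = m (i + 1) := Nat.div_mul_cancel hem
    have hcop : Nat.gcd (N (i + 1)) t = 1 := by
      have h1 : Nat.gcd (m (i + 1)) (e i) = e (i + 1) := by
        rw [he, he, urs_e_succ]
      rw [← htm, ← heN, Nat.gcd_mul_right] at h1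
      rw [Nat.gcd_comm]
      refine Nat.eq_of_mul_eq_mul_right (by omega : 0 < e (i + 1)) ?_
      rw [h1, Nat.one_mul]
    -- divisibility of the lower part of the sums
    have hdvdA : ∀ kk : ℕ → ℕ, e i ∣ ∑ j ∈ Finset.range (i + 1), kk j * m j := by
      intro kk
      refine Finset.dvd_sum ?_
      intro j hj'
      have : e i ∣ m j := by
        rw [he]; exact Finset.gcd_dvd hj'
      exact Dvd.dvd.mul_left this (kk j)
    have hsum2 : (∑ j ∈ Finset.range (i + 1), k j * m j) + k (i + 1) * m (i + 1)
        = (∑ j ∈ Finset.range (i + 1), k' j * m j) + k' (i + 1) * m (i + 1) := by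
      rw [← Finset.sum_range_succ, ← Finset.sum_range_succ]
      exact hsum
    have hmod : k (i + 1) * m (i + 1) ≡ k' (i + 1) * m (i + 1) [MOD e i] := by
      have h1 : (∑ j ∈ Finset.range (i + 1), k j * m j) ≡ 0 [MOD e i] :=
        (Nat.modEq_zero_iff_dvd).mpr (hdvdA k)
      have h2 : (∑ j ∈ Finset.range (i + 1), k' j * m j) ≡ 0 [MOD e i] :=
        (Nat.modEq_zero_iff_dvd).mpr (hdvdA k')
      calc k (i + 1) * m (i + 1)
          ≡ 0 + k (i + 1) * m (i + 1) [MOD e i] := by rw [Nat.zero_add]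
        _ ≡ (∑ j ∈ Finset.range (i + 1), k j * m j) + k (i + 1) * m (i + 1) [MOD e i] :=
            (h1.symm.add_right _)
        _ = (∑ j ∈ Finset.range (i + 1), k' j * m j) + k' (i + 1) * m (i + 1) := hsum2
        _ ≡ 0 + k' (i + 1) * m (i + 1) [MOD e i] := (h2.add_right _)
        _ = k' (i + 1) * m (i + 1) := Nat.zero_add _
    have hmod2 : k (i + 1) * t ≡ k' (i + 1) * t [MOD N (i + 1)] := by
      have : k (i + 1) * t * e (i + 1) ≡ k' (i + 1) * t * e (i + 1)
          [MOD N (i + 1) * e (i + 1)] := by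
        rw [heN, Nat.mul_assoc, Nat.mul_assoc, htm]
        exact hmod
      exact Nat.ModEq.mul_right_cancel' (by omega) this
    have hmod3 : k (i + 1) ≡ k' (i + 1) [MOD N (i + 1)] :=
      hmod2.cancel_right_of_coprime hcop
    have htop : k (i + 1) = k' (i + 1) := by
      have h1 := hk (i + 1) (Nat.le_add_left 1 i) (Nat.le_refl _)
      have h2 := hk' (i + 1) (Nat.le_add_left 1 i) (Nat.le_refl _)
      have := hmod3
      unfold Nat.ModEq at this
      rwa [Nat.mod_eq_of_lt h1, Nat.mod_eq_of_lt h2] at this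
    rcases Nat.lt_or_ge j (i + 1) with hlt | hge
    · have hsum' : (∑ j ∈ Finset.range (i + 1), k j * m j)
          = (∑ j ∈ Finset.range (i + 1), k' j * m j) := by
        have h3 : k (i + 1) * m (i + 1) = k' (i + 1) * m (i + 1) := by rw [htop]
        omega
      exact ih k k' (fun j h1 h2 => hk j h1 (by omega)) (fun j h1 h2 => hk' j h1 (by omega))
        hsum' j (by omega)
    · have : j = i + 1 := by omega
      subst this
      exact htop

end URSaux

/-- unique representation of elements of the semigroup
`S = ⟨m_0, …, m_g⟩` in the form `∑ k_i m_i` with `0 ≤ k_i < N_i` for `1 ≤ i ≤ g`. -/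
theorem unique_representation_in_semigroup
    (g : ℕ) (m : ℕ → ℕ) (hm : ∀ i ≤ g, 0 < m i)
    (e : ℕ → ℕ) (he : ∀ i, e i = (Finset.range (i + 1)).gcd m)
    (N : ℕ → ℕ) (hN : ∀ i, 1 ≤ i → N i = e (i - 1) / e i)
    (hNmem : ∀ i, 1 ≤ i → i ≤ g →
      N i * m i ∈ AddSubmonoid.closure (m '' Set.Iio i))
    (hNlt : ∀ i, 1 ≤ i → i ≤ g - 1 → N i * m i < m (i + 1))
    (a : ℕ) (ha : a ∈ AddSubmonoid.closure (m '' Set.Iic g)) :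
    ∃! k : ℕ → ℕ,
      (∀ j, g < j → k j = 0) ∧
      (∀ i, 1 ≤ i → i ≤ g → k i < N i) ∧
      a = ∑ j ∈ Finset.range (g + 1), k j * m j := by
  have hm0 : 0 < m 0 := hm 0 (Nat.zero_le g)
  have hNpos : ∀ i, 1 ≤ i → 0 < N i := by
    intro i hi
    rw [hN i hi]
    have h1 : 0 < e i := by rw [he]; exact urs_e_pos m hm0 _
    have h2 : e i ∣ e (i - 1) := by
      obtain ⟨i', rfl⟩ : ∃ i', i = i' + 1 := ⟨i - 1, by omega⟩
      simp only [Nat.add_sub_cancel, he]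
      exact urs_e_dvd_succ m i'
    exact Nat.div_pos (Nat.le_of_dvd (by rw [he]; exact urs_e_pos m hm0 _) h2) h1
  obtain ⟨k, hkb, hks⟩ :=
    urs_exists_rep g m hm0 e N he hNpos hNmem g (Nat.le_refl g) a ha
  set k0 : ℕ → ℕ := fun j => if j ≤ g then k j else 0 with hk0
  have hs0 : a = ∑ j ∈ Finset.range (g + 1), k0 j * m j := by
    rw [hks]
    apply Finset.sum_congr rfl
    intro j hj
    rw [Finset.mem_range] at hj
    simp only [hk0, if_pos (by omega : j ≤ g)]
  refine ⟨k0, ⟨fun j hj => by simp only [hk0, if_neg (by omega : ¬ j ≤ g)],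
    fun i h1 h2 => by simpa only [hk0, if_pos h2] using hkb i h1 h2, hs0⟩, ?_⟩
  intro y ⟨hyz, hyb, hys⟩
  funext j
  rcases le_or_gt j g with hj | hj
  · exact urs_uniq_rep m e N hm0 he hN g y k0 hyb
      (fun i h1 h2 => by simpa only [hk0, if_pos h2] using hkb i h1 h2)
      (by rw [← hys, ← hs0]) j hj
  · rw [hyz j hj]
    simp only [hk0, if_neg (by omega : ¬ j ≤ g)]
end

section
/- Let m_0, m_1, …, m_g be positive integers, let e_i = gcd(m_0, …, m_i) for 0 ≤ i ≤ g and N_i = e_{i-1}/e_i for 1 ≤ i ≤ g, and let S = ⟨m_0, …, m_g⟩ be the additive submonoid of the nonnegative integers generated by m_0, …, m_g. Assume that N_i·m_i ∈ ⟨m_0, …, m_{i-1}⟩ for all 1 ≤ i ≤ g and that N_i·m_i < m_{i+1} for all 1 ≤ i ≤ g−1. Then in the ring ℤ⟦t⟧ of formal power series with integer coefficients one has the identity (Σ_{a ∈ S} t^a) · Π_{i=0}^{g} (1 − t^{m_i}) = Π_{i=1}^{g} (1 − t^{N_i·m_i}). -/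
open scoped Classical

open PowerSeries

-- gcd of the first k+1 generators divides every element of the closure
private lemma gcd_dvd_of_mem_closure {m : ℕ → ℕ} {k a : ℕ}
    (ha : a ∈ AddSubmonoid.closure (m '' Set.Iic k)) :
    (Finset.range (k + 1)).gcd m ∣ a := by
  induction ha using AddSubmonoid.closure_induction with
  | mem x hx =>
      obtain ⟨i, hi, rfl⟩ := hx
      exact Finset.gcd_dvd (Finset.mem_range.mpr (by simp at hi; omega))
  | zero => exact dvd_zero _
  | add x y _ _ hx hy => exact dvd_add hx hy

private lemma c_eq_aux {E1 M c c' s s' : ℕ} (hE : 0 < Nat.gcd M E1)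
    (hs : E1 ∣ s) (hs' : E1 ∣ s')
    (hc' : c' < E1 / Nat.gcd M E1)
    (hle : c ≤ c')
    (heq : s + c * M = s' + c' * M) : c = c' := by
  obtain ⟨d, rfl⟩ := Nat.exists_eq_add_of_le hle
  have h2 : s + c * M = (s' + d * M) + c * M := by rw [heq]; ring
  have h3 : s = s' + d * M := Nat.add_right_cancel h2
  have h4 : E1 ∣ d * M := (Nat.dvd_add_right hs').mp (h3 ▸ hs)
  set E := Nat.gcd M E1 with hEdef
  have hdM : E ∣ M := Nat.gcd_dvd_left _ _
  have hdE1 : E ∣ E1 := Nat.gcd_dvd_right _ _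
  have cop : Nat.Coprime (M / E) (E1 / E) := Nat.coprime_div_gcd_div_gcd hE
  have hM : M = E * (M / E) := (Nat.mul_div_cancel' hdM).symm
  have hE1' : E1 = E * (E1 / E) := (Nat.mul_div_cancel' hdE1).symm
  have h5 : E * (E1 / E) ∣ d * (E * (M / E)) := by rw [← hM, ← hE1']; exact h4
  have h6 : E * (E1 / E) ∣ E * (d * (M / E)) := by
    convert h5 using 1; ring
  have h7 : E1 / E ∣ d * (M / E) := (mul_dvd_mul_iff_left hE.ne').mp h6
  have h8 : E1 / E ∣ d := (Nat.Coprime.dvd_of_dvd_mul_right cop.symm h7)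
  have : d = 0 := by
    by_contra hd
    exact absurd (Nat.le_of_dvd (Nat.pos_of_ne_zero hd) h8) (by omega)
  omega

private lemma c_eq {E1 M c c' s s' : ℕ} (hE : 0 < Nat.gcd M E1)
    (hs : E1 ∣ s) (hs' : E1 ∣ s')
    (hc : c < E1 / Nat.gcd M E1) (hc' : c' < E1 / Nat.gcd M E1)
    (heq : s + c * M = s' + c' * M) : c = c' := by
  rcases le_total c c' with h | h
  · exact c_eq_aux hE hs hs' hc' h heq
  · exact (c_eq_aux hE hs' hs hc h heq.symm).symm

private lemma exists_decomp {m : ℕ → ℕ} {g : ℕ} {Nv : ℕ} (hNv : 0 < Nv)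
    (hmem : Nv * m (g + 1) ∈ AddSubmonoid.closure (m '' Set.Iic g))
    {a : ℕ} (ha : a ∈ AddSubmonoid.closure (m '' Set.Iic (g + 1))) :
    ∃ c < Nv, ∃ s ∈ AddSubmonoid.closure (m '' Set.Iic g), a = s + c * m (g + 1) := by
  induction ha using AddSubmonoid.closure_induction with
  | mem x hx =>
      obtain ⟨i, hi, rfl⟩ := hx
      simp only [Set.mem_Iic] at hi
      rcases Nat.lt_or_ge i (g + 1) with h | h
      · exact ⟨0, hNv, m i,
          AddSubmonoid.subset_closure ⟨i, Set.mem_Iic.mpr (by omega), rfl⟩, by ring⟩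
      · have hig : i = g + 1 := by omega
        subst hig
        rcases Nat.lt_or_ge 1 Nv with h1 | h1
        · exact ⟨1, h1, 0, zero_mem _, by ring⟩
        · have hNv1 : Nv = 1 := by omega
          refine ⟨0, hNv, m (g + 1), ?_, by ring⟩
          rw [hNv1, one_mul] at hmem; exact hmem
  | zero => exact ⟨0, hNv, 0, zero_mem _, by simp⟩
  | add x y _ _ hx hy =>
      obtain ⟨cx, hcx, sx, hsx, rfl⟩ := hx
      obtain ⟨cy, hcy, sy, hsy, rfl⟩ := hy
      refine ⟨(cx + cy) % Nv, Nat.mod_lt _ hNv,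
        sx + sy + ((cx + cy) / Nv) * (Nv * m (g + 1)), ?_, ?_⟩
      · refine add_mem (add_mem hsx hsy) ?_
        simpa [nsmul_eq_mul] using nsmul_mem hmem ((cx + cy) / Nv)
      · have h := Nat.div_add_mod (cx + cy) Nv
        set M := m (g + 1)
        have key : ((cx + cy) / Nv) * (Nv * M) + ((cx + cy) % Nv) * M
            = cx * M + cy * M := by
          rw [show ((cx + cy) / Nv) * (Nv * M) + ((cx + cy) % Nv) * M
              = (Nv * ((cx + cy) / Nv) + (cx + cy) % Nv) * M from by ring, h, add_mul]
        linarith [key]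

private lemma mk_indicator_factor {m : ℕ → ℕ} {g Nv : ℕ} (hNv : 0 < Nv)
    (hmem : Nv * m (g + 1) ∈ AddSubmonoid.closure (m '' Set.Iic g))
    (huniq : ∀ c c' s s' : ℕ, c < Nv → c' < Nv →
      s ∈ AddSubmonoid.closure (m '' Set.Iic g) →
      s' ∈ AddSubmonoid.closure (m '' Set.Iic g) →
      s + c * m (g + 1) = s' + c' * m (g + 1) → c = c') :
    (PowerSeries.mk fun a : ℕ =>
        if a ∈ AddSubmonoid.closure (m '' Set.Iic (g + 1)) then (1 : ℤ) else 0)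
    = (PowerSeries.mk fun a : ℕ =>
        if a ∈ AddSubmonoid.closure (m '' Set.Iic g) then (1 : ℤ) else 0)
      * ∑ c ∈ Finset.range Nv, (X : ℤ⟦X⟧) ^ (c * m (g + 1)) := by
  set M := m (g + 1) with hM
  ext a
  rw [coeff_mk, Finset.mul_sum, map_sum]
  simp only [coeff_mul_X_pow', coeff_mk]
  by_cases hS : a ∈ AddSubmonoid.closure (m '' Set.Iic (g + 1))
  · obtain ⟨c0, hc0, s0, hs0, rfl⟩ := exists_decomp hNv hmem hS
    rw [if_pos hS]
    symm
    have h1 : ∀ c ∈ Finset.range Nv, c ≠ c0 →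
        (if c * M ≤ s0 + c0 * M then
          (if s0 + c0 * M - c * M ∈ AddSubmonoid.closure (m '' Set.Iic g)
            then (1 : ℤ) else 0) else 0) = 0 := by
      intro c hc hne
      split_ifs with h₁ h₂
      · exact absurd (huniq c c0 _ _ (Finset.mem_range.mp hc) hc0 h₂ hs0
          (Nat.sub_add_cancel h₁)) hne
      · rfl
      · rfl
    rw [Finset.sum_eq_single_of_mem c0 (Finset.mem_range.mpr hc0) h1,
      if_pos le_add_self, Nat.add_sub_cancel, if_pos hs0]
  · rw [if_neg hS]
    symm
    refine Finset.sum_eq_zero fun c hc => ?_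
    split_ifs with h₁ h₂
    · exfalso
      apply hS
      have hcM : c * M ∈ AddSubmonoid.closure (m '' Set.Iic (g + 1)) := by
        have : M ∈ AddSubmonoid.closure (m '' Set.Iic (g + 1)) :=
          AddSubmonoid.subset_closure ⟨g + 1, Set.mem_Iic.mpr le_rfl, rfl⟩
        simpa [nsmul_eq_mul] using nsmul_mem this c
      have hsub : AddSubmonoid.closure (m '' Set.Iic g) ≤
          AddSubmonoid.closure (m '' Set.Iic (g + 1)) :=
        AddSubmonoid.closure_mono (Set.image_mono (Set.Iic_subset_Iic.mpr (by omega)))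
      have : a = (a - c * M) + c * M := (Nat.sub_add_cancel h₁).symm
      rw [this]
      exact add_mem (hsub h₂) hcM
    · rfl
    · rfl


open PowerSeries in
/-- the semigroup Poincaré series of `S = ⟨m_0, …, m_g⟩` satisfies
`(Σ_{a ∈ S} t^a) · Π_{i=0}^{g} (1 − t^{m_i}) = Π_{i=1}^{g} (1 − t^{N_i m_i})`. -/
theorem semigroup_poincare_series_cyclotomic
    (g : ℕ) (m : ℕ → ℕ) (hm : ∀ i ≤ g, 0 < m i)
    (e : ℕ → ℕ) (he : ∀ i, e i = (Finset.range (i + 1)).gcd m)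
    (N : ℕ → ℕ) (hN : ∀ i, 1 ≤ i → N i = e (i - 1) / e i)
    (hNmem : ∀ i, 1 ≤ i → i ≤ g →
      N i * m i ∈ AddSubmonoid.closure (m '' Set.Iio i))
    (hNlt : ∀ i, 1 ≤ i → i ≤ g - 1 → N i * m i < m (i + 1)) :
    (PowerSeries.mk fun a : ℕ =>
        if a ∈ AddSubmonoid.closure (m '' Set.Iic g) then (1 : ℤ) else 0) *
      ∏ i ∈ Finset.range (g + 1), (1 - (X : ℤ⟦X⟧) ^ m i) =
    ∏ i ∈ Finset.Icc 1 g, (1 - (X : ℤ⟦X⟧) ^ (N i * m i)) := by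
  induction g with
  | zero =>
      have hm0 : 0 < m 0 := hm 0 le_rfl
      have hmem0 : ∀ a : ℕ,
          a ∈ AddSubmonoid.closure (m '' Set.Iic 0) ↔ m 0 ∣ a := by
        intro a
        have himg : m '' Set.Iic 0 = {m 0} := by
          ext x
          simp [Set.mem_image, Nat.le_zero, eq_comm]
        rw [himg, AddSubmonoid.mem_closure_singleton]
        constructor
        · rintro ⟨n, rfl⟩
          simp [smul_eq_mul, Dvd.intro n rfl]
        · rintro ⟨k, rfl⟩
          exact ⟨k, by rw [smul_eq_mul]; ring⟩
      rw [Finset.Icc_eq_empty (by omega), Finset.prod_empty, Finset.prod_range_one]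
      ext n
      rw [mul_sub, mul_one, map_sub, coeff_mk, coeff_mul_X_pow', coeff_mk, coeff_one]
      simp only [hmem0]
      have f2 : n < m 0 → m 0 ∣ n → n = 0 := fun h hd => Nat.eq_zero_of_dvd_of_lt hd h
      have f3 : m 0 ≤ n → m 0 ∣ n - m 0 → m 0 ∣ n := fun h hd => by
        rw [← Nat.sub_add_cancel h]
        exact Nat.dvd_add hd dvd_rfl
      split_ifs with h1 h2 h3 <;>
        first
          | rfl
          | omega
          | (exact absurd (Nat.dvd_sub ‹m 0 ∣ n› dvd_rfl) ‹¬m 0 ∣ n - m 0›)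
          | (exact absurd (f3 ‹m 0 ≤ n› ‹m 0 ∣ n - m 0›) ‹¬m 0 ∣ n›)
          | (exact absurd (show m 0 ∣ n by rw [‹n = 0›]; exact dvd_zero _) ‹¬m 0 ∣ n›)
  | succ g ih =>
      have hm' : ∀ i ≤ g, 0 < m i := fun i hi => hm i (by omega)
      have hNmem' : ∀ i, 1 ≤ i → i ≤ g →
          N i * m i ∈ AddSubmonoid.closure (m '' Set.Iio i) :=
        fun i h1 h2 => hNmem i h1 (by omega)
      have hNlt' : ∀ i, 1 ≤ i → i ≤ g - 1 → N i * m i < m (i + 1) :=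
        fun i h1 h2 => hNlt i h1 (by omega)
      have IH := ih hm' hNmem' hNlt'
      have hm0 : 0 < m 0 := hm 0 (by omega)
      have hIio : m '' Set.Iio (g + 1) = m '' Set.Iic g := by
        ext x
        simp [Nat.lt_succ_iff]
      have hEgcd : e (g + 1) = Nat.gcd (m (g + 1)) (e g) := by
        rw [he (g + 1), he g, Finset.range_add_one, Finset.gcd_insert]
        rfl
      have hepos : 0 < e g := by
        rw [he g]
        have hdv : (Finset.range (g + 1)).gcd m ∣ m 0 :=
          Finset.gcd_dvd (Finset.mem_range.mpr (by omega))
        exact Nat.pos_of_ne_zero fun h0 => by rw [h0] at hdv; omega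
      have hE2pos : 0 < e (g + 1) := by
        rw [hEgcd]
        exact Nat.gcd_pos_of_pos_left _ (hm (g + 1) le_rfl)
      have hdvd : e (g + 1) ∣ e g := hEgcd ▸ Nat.gcd_dvd_right _ _
      have hNveq : N (g + 1) = e g / e (g + 1) := by
        simpa using hN (g + 1) (by omega)
      have hNvpos : 0 < N (g + 1) := by
        rw [hNveq]
        exact Nat.div_pos (Nat.le_of_dvd hepos hdvd) hE2pos
      have hmemS' : N (g + 1) * m (g + 1) ∈ AddSubmonoid.closure (m '' Set.Iic g) := by
        rw [← hIio]
        exact hNmem (g + 1) (by omega) le_rfl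
      have huniq : ∀ c c' s s' : ℕ, c < N (g + 1) → c' < N (g + 1) →
          s ∈ AddSubmonoid.closure (m '' Set.Iic g) →
          s' ∈ AddSubmonoid.closure (m '' Set.Iic g) →
          s + c * m (g + 1) = s' + c' * m (g + 1) → c = c' := by
        intro c c' s s' hc hc' hs hs' heq
        have hE : 0 < Nat.gcd (m (g + 1)) (e g) := hEgcd ▸ hE2pos
        have hds : e g ∣ s := he g ▸ gcd_dvd_of_mem_closure hs
        have hds' : e g ∣ s' := he g ▸ gcd_dvd_of_mem_closure hs'
        have hNrw : N (g + 1) = e g / Nat.gcd (m (g + 1)) (e g) := by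
          rw [hNveq, hEgcd]
        exact c_eq hE hds hds' (hNrw ▸ hc) (hNrw ▸ hc') heq
      rw [mk_indicator_factor hNvpos hmemS' huniq, Finset.prod_range_succ]
      have geom : (∑ c ∈ Finset.range (N (g + 1)), (X : ℤ⟦X⟧) ^ (c * m (g + 1))) *
          (1 - X ^ m (g + 1)) = 1 - X ^ (N (g + 1) * m (g + 1)) := by
        have hsum : (∑ c ∈ Finset.range (N (g + 1)), (X : ℤ⟦X⟧) ^ (c * m (g + 1)))
            = ∑ i ∈ Finset.range (N (g + 1)), ((X : ℤ⟦X⟧) ^ m (g + 1)) ^ i := by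
          refine Finset.sum_congr rfl fun i _ => ?_
          rw [← pow_mul, mul_comm]
        rw [hsum]
        have hgs := geom_sum_mul ((X : ℤ⟦X⟧) ^ m (g + 1)) (N (g + 1))
        rw [← pow_mul, mul_comm (m (g + 1))] at hgs
        linear_combination -hgs
      calc (PowerSeries.mk fun a : ℕ =>
              if a ∈ AddSubmonoid.closure (m '' Set.Iic g) then (1 : ℤ) else 0) *
            (∑ c ∈ Finset.range (N (g + 1)), (X : ℤ⟦X⟧) ^ (c * m (g + 1))) *
            ((∏ i ∈ Finset.range (g + 1), (1 - (X : ℤ⟦X⟧) ^ m i)) *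
              (1 - X ^ m (g + 1)))
          = ((PowerSeries.mk fun a : ℕ =>
              if a ∈ AddSubmonoid.closure (m '' Set.Iic g) then (1 : ℤ) else 0) *
            ∏ i ∈ Finset.range (g + 1), (1 - (X : ℤ⟦X⟧) ^ m i)) *
            ((∑ c ∈ Finset.range (N (g + 1)), (X : ℤ⟦X⟧) ^ (c * m (g + 1))) *
              (1 - X ^ m (g + 1))) := by ring
        _ = (∏ i ∈ Finset.Icc 1 g, (1 - (X : ℤ⟦X⟧) ^ (N i * m i))) *
            (1 - X ^ (N (g + 1) * m (g + 1))) := by rw [IH, geom]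
        _ = ∏ i ∈ Finset.Icc 1 (g + 1), (1 - (X : ℤ⟦X⟧) ^ (N i * m i)) :=
            (Finset.prod_Icc_succ_top (by omega) _).symm
end

section
/- Let m_0, m_1, …, m_g be positive integers, let e_i = gcd(m_0, …, m_i) for 0 ≤ i ≤ g and N_i = e_{i-1}/e_i for 1 ≤ i ≤ g. Assume m_0 < m_1, N_i ≥ 2 for all 1 ≤ i ≤ g, N_i·m_i ∈ ⟨m_0, …, m_{i-1}⟩ for all 1 ≤ i ≤ g, and N_i·m_i < m_{i+1} for all 1 ≤ i ≤ g−1. Then for every 1 ≤ i ≤ g one has (N_i − 1)·m_i ∉ ⟨m_0, …, m_{i-1}⟩ and m_i ∉ ⟨m_0, …, m_{i-1}⟩; moreover {m_0, m_1, …, m_g} is a minimal generating set of the submonoid S = ⟨m_0, …, m_g⟩, i.e., for every index j, m_j does not belong to the submonoid generated by {m_i : i ≠ j}. -/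
/-- `(N_i − 1)·m_i` and `m_i` do not belong to `⟨m_0, …, m_{i-1}⟩`,
and `{m_0, …, m_g}` is a minimal generating set of `S = ⟨m_0, …, m_g⟩`. -/
theorem minimal_generating_set
    (g : ℕ) (m : ℕ → ℕ) (hm : ∀ i ≤ g, 0 < m i)
    (e : ℕ → ℕ) (he : ∀ i, e i = (Finset.range (i + 1)).gcd m)
    (N : ℕ → ℕ) (hN : ∀ i, 1 ≤ i → N i = e (i - 1) / e i)
    (hm01 : m 0 < m 1)
    (hN2 : ∀ i, 1 ≤ i → i ≤ g → 2 ≤ N i)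
    (hNmem : ∀ i, 1 ≤ i → i ≤ g →
      N i * m i ∈ AddSubmonoid.closure (m '' Set.Iio i))
    (hNlt : ∀ i, 1 ≤ i → i ≤ g - 1 → N i * m i < m (i + 1)) :
    (∀ i, 1 ≤ i → i ≤ g →
      (N i - 1) * m i ∉ AddSubmonoid.closure (m '' Set.Iio i) ∧
      m i ∉ AddSubmonoid.closure (m '' Set.Iio i)) ∧
    (∀ j ≤ g, m j ∉ AddSubmonoid.closure (m '' (Set.Iic g \ {j}))) := by
  have hg0 : 0 < m 0 := hm 0 (Nat.zero_le g)
  -- e i > 0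
  have hepos : ∀ i, 0 < e i := by
    intro i
    have hd : e i ∣ m 0 := by
      rw [he]
      exact Finset.gcd_dvd (Finset.mem_range.mpr (Nat.succ_pos i))
    exact Nat.pos_of_dvd_of_pos hd hg0
  -- e i = gcd (m i) (e (i-1))
  have hrec : ∀ i, 1 ≤ i → e i = Nat.gcd (m i) (e (i - 1)) := by
    intro i hi
    rw [he, he, Nat.sub_add_cancel hi, Finset.range_add_one, Finset.gcd_insert]
    rfl
  have hedvd : ∀ i, 1 ≤ i → e i ∣ e (i - 1) := by
    intro i hi; rw [hrec i hi]; exact Nat.gcd_dvd_right _ _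
  have heN : ∀ i, 1 ≤ i → e (i - 1) = N i * e i := by
    intro i hi
    rw [hN i hi, Nat.div_mul_cancel (hedvd i hi)]
  -- divisibility of closure elements
  have hdvdcl : ∀ i, 1 ≤ i → ∀ x ∈ AddSubmonoid.closure (m '' Set.Iio i), e (i - 1) ∣ x := by
    intro i hi x hx
    induction hx using AddSubmonoid.closure_induction with
    | mem y hy =>
      obtain ⟨k, hk, rfl⟩ := hy
      rw [he, Nat.sub_add_cancel hi]
      exact Finset.gcd_dvd (Finset.mem_range.mpr hk)
    | zero => exact dvd_zero _
    | add x y _ _ hx hy => exact dvd_add hx hy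
  -- key lemma
  have key : ∀ i, 1 ≤ i → i ≤ g → ∀ k, 1 ≤ k → k < N i →
      k * m i ∉ AddSubmonoid.closure (m '' Set.Iio i) := by
    intro i hi hig k hk1 hkN hmem
    have hdvd : e (i - 1) ∣ k * m i := hdvdcl i hi _ hmem
    have hei : 0 < e i := hepos i
    have hmi : e i ∣ m i := by rw [hrec i hi]; exact Nat.gcd_dvd_left _ _
    set d := e i
    obtain ⟨m', hm'⟩ := hmi
    have hcop : Nat.Coprime (m i / d) (e (i - 1) / d) := by
      have := Nat.coprime_div_gcd_div_gcd (m := m i) (n := e (i - 1)) (by rw [← hrec i hi]; exact hei)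
      rwa [← hrec i hi] at this
    have hm'' : m i / d = m' := by rw [hm']; exact Nat.mul_div_cancel_left _ hei
    have hE : e (i - 1) / d = N i := by
      rw [heN i hi]; exact Nat.mul_div_cancel _ hei
    rw [hm'', hE] at hcop
    -- N i * d ∣ k * (d * m')
    rw [heN i hi, hm'] at hdvd
    have hNd : N i ∣ k * m' := by
      have : N i * d ∣ (k * m') * d := by
        calc N i * d ∣ k * (d * m') := hdvd
        _ = (k * m') * d := by ring
      exact (Nat.mul_dvd_mul_iff_right hei).mp this
    have : N i ∣ k := (Nat.Coprime.dvd_of_dvd_mul_right (by exact Nat.coprime_comm.mp hcop)) hNd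
    exact absurd (Nat.le_of_dvd hk1 this) (not_le.mpr hkN)
  -- claim 1
  have claim1 : ∀ i, 1 ≤ i → i ≤ g →
      (N i - 1) * m i ∉ AddSubmonoid.closure (m '' Set.Iio i) ∧
      m i ∉ AddSubmonoid.closure (m '' Set.Iio i) := by
    intro i hi hig
    have h2 := hN2 i hi hig
    constructor
    · exact key i hi hig (N i - 1) (by omega) (by omega)
    · have := key i hi hig 1 le_rfl (by omega)
      rwa [one_mul] at this
  refine ⟨claim1, ?_⟩
  -- strict monotonicity on Iic g
  have hmono : ∀ i j, i < j → j ≤ g → m i < m j := by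
    have step : ∀ i, i + 1 ≤ g → m i < m (i + 1) := by
      intro i hig
      rcases Nat.eq_zero_or_pos i with rfl | hi
      · exact hm01
      · have h2 := hN2 i hi (by omega)
        have := hNlt i hi (by omega)
        have : m i < N i * m i := by
          have := hm i (by omega)
          calc m i = 1 * m i := (one_mul _).symm
          _ < N i * m i := Nat.mul_lt_mul_of_pos_right (by omega) this
        omega
    intro i j hij hjg
    induction j with
    | zero => omega
    | succ n ih =>
      rcases Nat.lt_or_ge i n with h | h
      · exact lt_trans (ih h (by omega)) (step n hjg)
      · have : i = n := by omega
        subst this; exact step i hjg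
  -- part 2
  intro j hj hmem
  have hsmall : m j ∈ AddSubmonoid.closure (m '' Set.Iio j) := by
    have gen : ∀ x ∈ AddSubmonoid.closure (m '' (Set.Iic g \ {j})),
        x ≤ m j → x ∈ AddSubmonoid.closure (m '' Set.Iio j) := by
      intro x hx
      induction hx using AddSubmonoid.closure_induction with
      | mem y hy =>
        intro hle
        obtain ⟨k, ⟨hkg, hkj⟩, rfl⟩ := hy
        have hkj' : k ≠ j := hkj
        have : k < j := by
          by_contra h
          have : j < k := by omega
          exact absurd hle (not_le.mpr (hmono j k this hkg))
        exact AddSubmonoid.subset_closure ⟨k, this, rfl⟩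
      | zero => intro _; exact AddSubmonoid.zero_mem _
      | add x y hx' hy' ihx ihy =>
        intro hle
        exact AddSubmonoid.add_mem _ (ihx (by omega)) (ihy (by omega))
    exact gen _ hmem le_rfl
  rcases Nat.eq_zero_or_pos j with rfl | hj1
  · have himg : m '' Set.Iio 0 = ∅ := by ext x; simp
    rw [himg, AddSubmonoid.closure_empty, AddSubmonoid.mem_bot] at hsmall
    omega
  · exact (claim1 j hj1 hj).2 hsmall
end

section
/- Let x(t), y(t) ∈ ℂ⟦t⟧ be formal power series with zero constant term. For every nonnegative integer a, the quotient vector space J(a)/J(a+1) has dimension at most 2 over ℝ. -/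
open PowerSeries

/-- The substitution `f(x(t), y(t))` of two one-variable complex power series with
zero constant term into a two-variable real power series `f`, defined
coefficient-wise: the terms of `f` of total degree `> n` do not contribute to the
`n`-th coefficient since `x` and `y` have zero constant term. -/
noncomputable def substXY (x y : PowerSeries ℂ) (f : MvPowerSeries (Fin 2) ℝ) :
    PowerSeries ℂ :=
  PowerSeries.mk fun n =>
    ∑ p ∈ Finset.range (n + 1) ×ˢ Finset.range (n + 1),
      ((MvPowerSeries.coeff (Finsupp.single 0 p.1 + Finsupp.single 1 p.2) f : ℝ) : ℂ) *
        PowerSeries.coeff n (x ^ p.1 * y ^ p.2)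

/-- The order function `ν(f) := ord_t f(x(t), y(t)) ∈ ℤ_{≥0} ∪ {∞}`. -/
noncomputable def nuXY (x y : PowerSeries ℂ) (f : MvPowerSeries (Fin 2) ℝ) : ℕ∞ :=
  (substXY x y f).order

/-- The `ℝ`-subspace `J(a) = {f ∈ ℝ⟦X,Y⟧ : ν(f) ≥ a}` of `ℝ⟦X,Y⟧`. -/
noncomputable def JXY (x y : PowerSeries ℂ) (a : ℕ) :
    Submodule ℝ (MvPowerSeries (Fin 2) ℝ) where
  carrier := {f | (a : ℕ∞) ≤ nuXY x y f}
  zero_mem' := by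
    have : substXY x y 0 = 0 := by
      ext n
      simp [substXY]
    simp [Set.mem_setOf_eq, nuXY, this, PowerSeries.order_zero]
  add_mem' := by
    intro f g hf hg
    have hadd : substXY x y (f + g) = substXY x y f + substXY x y g := by
      ext n
      simp [substXY, map_add, add_mul, Finset.sum_add_distrib]
    have := PowerSeries.min_order_le_order_add (substXY x y f) (substXY x y g)
    simp only [Set.mem_setOf_eq, nuXY] at *
    rw [hadd]
    exact le_trans (le_min hf hg) this
  smul_mem' := by
    intro r f hf
    have hsmul : substXY x y (r • f) = (r : ℂ) • substXY x y f := by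
      ext n
      simp [substXY, Finset.smul_sum, mul_assoc]
    simp only [Set.mem_setOf_eq, nuXY] at *
    rw [hsmul]
    apply PowerSeries.le_order
    intro i hi
    have := PowerSeries.coeff_of_lt_order i (lt_of_lt_of_le hi hf)
    simp [this]

/-- The quotient `J(a)/J(a+1)` as an `ℝ`-module. -/
noncomputable abbrev JQuot (x y : PowerSeries ℂ) (a : ℕ) :=
  (JXY x y a) ⧸ (Submodule.comap (JXY x y a).subtype (JXY x y (a + 1)))

/-- each quotient `J(a)/J(a+1)` has `ℝ`-dimension at most `2`. -/
theorem rank_JQuot_le_two (x y : PowerSeries ℂ)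
    (hx : PowerSeries.constantCoeff x = 0) (hy : PowerSeries.constantCoeff y = 0)
    (a : ℕ) :
    Module.rank ℝ (JQuot x y a) ≤ 2 := by
  have hadd : ∀ f g, substXY x y (f + g) = substXY x y f + substXY x y g := by
    intro f g
    ext n
    simp [substXY, map_add, add_mul, Finset.sum_add_distrib]
  have hsmul : ∀ (r : ℝ) f, substXY x y (r • f) = (r : ℂ) • substXY x y f := by
    intro r f
    ext n
    simp [substXY, Finset.smul_sum, mul_assoc]
  let φ : (JXY x y a) →ₗ[ℝ] ℂ :=
    { toFun := fun f => PowerSeries.coeff a (substXY x y f.1)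
      map_add' := by intro f g; simp [hadd]
      map_smul' := by intro r f; simp [hsmul, Complex.real_smul]
                      }
  have hker : LinearMap.ker φ = Submodule.comap (JXY x y a).subtype (JXY x y (a + 1)) := by
    ext f
    simp only [LinearMap.mem_ker, Submodule.mem_comap, Submodule.subtype_apply]
    constructor
    · intro h
      show ((a + 1 : ℕ) : ℕ∞) ≤ nuXY x y f.1
      apply PowerSeries.le_order
      intro i hi
      have hi' : i < a + 1 := by exact_mod_cast hi
      rcases Nat.lt_succ_iff_lt_or_eq.mp hi' with h' | h'
      · exact PowerSeries.coeff_of_lt_order i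
          (lt_of_lt_of_le (by exact_mod_cast h') f.2)
      · subst h'; exact h
    · intro h
      have hf : ((a : ℕ) : ℕ∞) < ((a + 1 : ℕ) : ℕ∞) := by exact_mod_cast Nat.lt_succ_self a
      exact PowerSeries.coeff_of_lt_order a (lt_of_lt_of_le hf h)
  have e : JQuot x y a ≃ₗ[ℝ] LinearMap.range φ :=
    (Submodule.quotEquivOfEq _ _ hker.symm).trans φ.quotKerEquivRange
  calc Module.rank ℝ (JQuot x y a) = Module.rank ℝ (LinearMap.range φ) := e.rank_eq
    _ ≤ Module.rank ℝ ℂ := Submodule.rank_le _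
    _ = 2 := Complex.rank_real_complex
end

section
/- Let α ∈ ℂ with Im α ≠ 0, and set x(t) = t^4 and y(t) = t^6 + α·t^7 in ℂ⟦t⟧. Then the set of values { ν(f) : f ∈ ℝ⟦X,Y⟧ with f(x(t), y(t)) ≠ 0 } equals the additive submonoid of ℤ_{≥0} generated by 4, 6 and 13. -/
open PowerSeries

section Aux

variable (α : ℂ)

local notation "xx" => (X : ℂ⟦X⟧) ^ 4
local notation "yy" => (X : ℂ⟦X⟧) ^ 6 + PowerSeries.C α * (X : ℂ⟦X⟧) ^ 7

noncomputable def cc (f : MvPowerSeries (Fin 2) ℝ) (p q : ℕ) : ℂ :=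
  ((MvPowerSeries.coeff (Finsupp.single 0 p + Finsupp.single 1 q) f : ℝ) : ℂ)

lemma coeff_one_add_pow (q j : ℕ) :
    PowerSeries.coeff j ((1 + PowerSeries.C α * X) ^ q) = (q.choose j : ℂ) * α ^ j := by
  rw [add_comm, add_pow, map_sum]
  have key : ∀ k, (PowerSeries.C α * X) ^ k * (1:ℂ⟦X⟧) ^ (q - k) * (q.choose k : ℂ⟦X⟧)
      = PowerSeries.C ((q.choose k : ℂ) * α ^ k) * X ^ k := by
    intro k
    rw [mul_pow, ← map_pow, ← map_natCast (PowerSeries.C (R := ℂ)) (q.choose k), one_pow, map_mul]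
    ring
  simp only [key, coeff_C_mul, coeff_X_pow]
  rw [Finset.sum_eq_single j]
  · by_cases h : j ≤ q
    · simp
    · simp [Nat.choose_eq_zero_of_lt (not_le.mp h)]
  · intro k _ hk
    simp [Ne.symm hk]
  · intro h
    simp only [Finset.mem_range, not_lt] at h
    simp [Nat.choose_eq_zero_of_lt h]

lemma coeff_xy (p q m : ℕ) :
    PowerSeries.coeff m (xx ^ p * yy ^ q) =
      if 4 * p + 6 * q ≤ m then (q.choose (m - (4 * p + 6 * q)) : ℂ) * α ^ (m - (4 * p + 6 * q))
      else 0 := by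
  have hy : ((X : ℂ⟦X⟧) ^ 6 + PowerSeries.C α * (X : ℂ⟦X⟧) ^ 7)
      = X ^ 6 * (1 + PowerSeries.C α * X) := by ring
  have h2 : xx ^ p * yy ^ q = X ^ (4 * p + 6 * q) * (1 + PowerSeries.C α * X) ^ q := by
    rw [hy, mul_pow, ← pow_mul, ← pow_mul, pow_add]
    ring
  rw [h2, coeff_X_pow_mul', coeff_one_add_pow]

lemma coeff_subst (f : MvPowerSeries (Fin 2) ℝ) (m : ℕ) :
    PowerSeries.coeff m (substXY xx yy f) =
      ∑ p ∈ Finset.range (m+1) ×ˢ Finset.range (m+1),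
        cc f p.1 p.2 *
          (if 4*p.1+6*p.2 ≤ m then (p.2.choose (m - (4*p.1+6*p.2)) : ℂ) * α ^ (m - (4*p.1+6*p.2)) else 0) := by
  simp only [substXY, coeff_mk, coeff_xy, cc]

lemma coeff15 (f : MvPowerSeries (Fin 2) ℝ) :
    PowerSeries.coeff 15 (substXY xx yy f) = α * cc f 2 1 := by
  rw [coeff_subst]
  simp [Finset.sum_product, Finset.sum_range_succ, Nat.choose]
  ring

lemma coeff_gapzero (f : MvPowerSeries (Fin 2) ℝ) (m : ℕ) (hm : m ∈ ({1,2,3,5,9} : Finset ℕ)) :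
    PowerSeries.coeff m (substXY xx yy f) = 0 := by
  fin_cases hm <;>
  · rw [coeff_subst]
    simp [Finset.sum_product, Finset.sum_range_succ, Nat.choose]

lemma coeff6 (f : MvPowerSeries (Fin 2) ℝ) :
    PowerSeries.coeff 6 (substXY xx yy f) = cc f 0 1 := by
  rw [coeff_subst]; simp [Finset.sum_product, Finset.sum_range_succ, Nat.choose]

lemma coeff7 (f : MvPowerSeries (Fin 2) ℝ) :
    PowerSeries.coeff 7 (substXY xx yy f) = α * cc f 0 1 := by
  rw [coeff_subst]; simp [Finset.sum_product, Finset.sum_range_succ, Nat.choose]; ring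

lemma coeff10 (f : MvPowerSeries (Fin 2) ℝ) :
    PowerSeries.coeff 10 (substXY xx yy f) = cc f 1 1 := by
  rw [coeff_subst]; simp [Finset.sum_product, Finset.sum_range_succ, Nat.choose]

lemma coeff11 (f : MvPowerSeries (Fin 2) ℝ) :
    PowerSeries.coeff 11 (substXY xx yy f) = α * cc f 1 1 := by
  rw [coeff_subst]; simp [Finset.sum_product, Finset.sum_range_succ, Nat.choose]; ring

lemma coeff13 (f : MvPowerSeries (Fin 2) ℝ) :
    PowerSeries.coeff 13 (substXY xx yy f) = 2 * α * cc f 0 2 := by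
  rw [coeff_subst]; simp [Finset.sum_product, Finset.sum_range_succ, Nat.choose]; ring

lemma coeff14 (f : MvPowerSeries (Fin 2) ℝ) :
    PowerSeries.coeff 14 (substXY xx yy f) = α^2 * cc f 0 2 + cc f 2 1 := by
  rw [coeff_subst]; simp [Finset.sum_product, Finset.sum_range_succ, Nat.choose]; ring

lemma pair_eq (p q p' q' : ℕ) :
    Finsupp.single (0 : Fin 2) p' + Finsupp.single 1 q' =
      Finsupp.single (0 : Fin 2) p + Finsupp.single 1 q ↔ p' = p ∧ q' = q := by
  constructor
  · intro h
    constructor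
    · have := DFunLike.congr_fun h 0
      simpa [Finsupp.single_apply] using this
    · have := DFunLike.congr_fun h 1
      simpa [Finsupp.single_apply] using this
  · rintro ⟨rfl, rfl⟩; rfl

lemma substXY_monomial (p q : ℕ) (r : ℝ) :
    substXY xx yy
        (MvPowerSeries.monomial (Finsupp.single 0 p + Finsupp.single 1 q) r) =
      PowerSeries.C (R := ℂ) r * (xx ^ p * yy ^ q) := by
  ext m
  rw [coeff_C_mul]
  simp only [substXY, coeff_mk, MvPowerSeries.coeff_monomial, pair_eq]
  have key : ∀ z : ℕ × ℕ, ((if z.1 = p ∧ z.2 = q then r else 0 : ℝ) : ℂ) *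
      PowerSeries.coeff m (xx ^ z.1 * yy ^ z.2) =
      if z = (p, q) then (r : ℂ) * PowerSeries.coeff m (xx ^ z.1 * yy ^ z.2) else 0 := by
    intro z
    by_cases h : z = (p, q)
    · simp [h, Prod.ext_iff]
    · rw [if_neg h, if_neg, Complex.ofReal_zero, zero_mul]
      rw [Prod.ext_iff] at h; exact h
  simp only [key]
  rw [Finset.sum_ite_eq' (Finset.range (m+1) ×ˢ Finset.range (m+1)) (p, q)]
  by_cases hmem : (p, q) ∈ Finset.range (m+1) ×ˢ Finset.range (m+1)
  · rw [if_pos hmem]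
  · rw [if_neg hmem]
    have h4 : ¬ (4 * p + 6 * q ≤ m) := by
      simp only [Finset.mem_product, Finset.mem_range, not_and_or, not_lt] at hmem
      omega
    rw [coeff_xy, if_neg h4, mul_zero]

lemma substXY_sum {ι : Type*} (s : Finset ι) (g : ι → MvPowerSeries (Fin 2) ℝ) :
    substXY xx yy (∑ i ∈ s, g i) = ∑ i ∈ s, substXY xx yy (g i) := by
  ext n
  rw [map_sum]
  simp only [substXY, coeff_mk, map_sum, Complex.ofReal_sum, Finset.sum_mul]
  exact Finset.sum_comm

lemma substXY_witness (a b c : ℕ) :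
    substXY xx yy (∑ k ∈ Finset.range (c+1),
        MvPowerSeries.monomial
          (Finsupp.single 0 (a + 3*k) + Finsupp.single 1 (b + 2*(c-k)))
          ((-1 : ℝ)^k * (c.choose k))) =
      xx ^ a * yy ^ b * (yy ^ 2 - xx ^ 3) ^ c := by
  rw [substXY_sum]
  simp only [substXY_monomial]
  have expand : (yy ^ 2 - xx ^ 3) ^ c =
      ∑ k ∈ Finset.range (c+1), (-(xx^3))^k * (yy^2)^(c-k) * (c.choose k : ℂ⟦X⟧) := by
    rw [← add_pow]
    ring_nf
  rw [expand, Finset.mul_sum]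
  refine Finset.sum_congr rfl fun k hk => ?_
  simp only [Finset.mem_range, Nat.lt_succ_iff] at hk
  push_cast
  rw [map_mul, map_pow, map_neg, map_one, map_natCast]
  rw [pow_add, pow_add, pow_mul, pow_mul, neg_pow]
  ring

lemma order_unit_pow (u v : ℂ) (hu : u ≠ 0) (c : ℕ) :
    ((PowerSeries.C u + PowerSeries.C v * X) ^ c).order = 0 := by
  have : ((0:ℕ) : ℕ∞) = 0 := rfl
  rw [← this, order_eq_nat]
  constructor
  · simp only [coeff_zero_eq_constantCoeff, map_pow, map_add, map_mul,
      constantCoeff_C, constantCoeff_X, mul_zero, add_zero]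
    exact pow_ne_zero _ hu
  · intro i hi; omega

lemma order_witness (hα0 : α ≠ 0) (a b c : ℕ) :
    (xx ^ a * yy ^ b * (yy ^ 2 - xx ^ 3) ^ c).order = ((4*a+6*b+13*c : ℕ) : ℕ∞) := by
  have hx : ((X : ℂ⟦X⟧) ^ 4) ^ a = X ^ (4*a) := by rw [← pow_mul]
  have hy : ((X : ℂ⟦X⟧) ^ 6 + PowerSeries.C α * X ^ 7) ^ b
      = X ^ (6*b) * ((1:ℂ⟦X⟧) + PowerSeries.C α * X) ^ b := by
    have hb : (X : ℂ⟦X⟧) ^ 6 + PowerSeries.C α * X ^ 7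
        = X ^ 6 * ((1:ℂ⟦X⟧) + PowerSeries.C α * X) := by ring
    rw [hb, mul_pow, ← pow_mul]
  have hbase : ((X : ℂ⟦X⟧) ^ 6 + PowerSeries.C α * X ^ 7) ^ 2 - ((X:ℂ⟦X⟧) ^ 4) ^ 3
      = X ^ 13 * (PowerSeries.C (2*α) + PowerSeries.C (α^2) * X) := by
    have h2 : PowerSeries.C (2*α) = 2 * PowerSeries.C α := by rw [map_mul, map_ofNat]
    have h3 : PowerSeries.C (α^2) = (PowerSeries.C α)^2 := by rw [map_pow]
    rw [h2, h3]; ring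
  have hw : (((X : ℂ⟦X⟧) ^ 6 + PowerSeries.C α * X ^ 7) ^ 2 - ((X:ℂ⟦X⟧) ^ 4) ^ 3) ^ c
      = X ^ (13*c) * (PowerSeries.C (2*α) + PowerSeries.C (α^2) * X) ^ c := by
    rw [hbase, mul_pow, ← pow_mul]
  have o1 : (((1:ℂ⟦X⟧) + PowerSeries.C α * X) ^ b).order = 0 := by
    have := order_unit_pow 1 α one_ne_zero b
    rwa [map_one] at this
  have o2 : ((PowerSeries.C (2*α) + PowerSeries.C (α^2) * X) ^ c).order = 0 :=
    order_unit_pow _ _ (by simpa using hα0) c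
  rw [order_mul, order_mul, hx, hy, hw, order_mul, order_mul, order_X_pow, order_X_pow,
    order_X_pow, o1, o2, add_zero, add_zero]
  push_cast
  ring

lemma exists_f (hα0 : α ≠ 0) (a b c : ℕ) :
    ∃ f : MvPowerSeries (Fin 2) ℝ, substXY xx yy f ≠ 0 ∧
      (substXY xx yy f).order = ((4*a+6*b+13*c : ℕ) : ℕ∞) := by
  refine ⟨_, ?_, (substXY_witness α a b c).symm ▸ order_witness α hα0 a b c⟩
  rw [substXY_witness]
  intro h
  have := order_witness α hα0 a b c
  rw [h, order_zero] at this
  exact (ENat.top_ne_coe _) this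

lemma rep_of_notgap (n : ℕ) (h1 : n ≠ 1) (h2 : n ≠ 2) (h3 : n ≠ 3) (h5 : n ≠ 5)
    (h7 : n ≠ 7) (h9 : n ≠ 9) (h11 : n ≠ 11) (h15 : n ≠ 15) :
    ∃ a b c : ℕ, n = 4*a+6*b+13*c := by
  rcases Nat.even_or_odd n with he | ho
  · rcases he with ⟨k, hk⟩
    by_cases h4 : n % 4 = 0
    · exact ⟨n/4, 0, 0, by omega⟩
    · exact ⟨(n-6)/4, 1, 0, by omega⟩
  · rcases ho with ⟨k, hk⟩
    by_cases h4 : (n - 13) % 4 = 0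
    · exact ⟨(n-13)/4, 0, 1, by omega⟩
    · exact ⟨(n-19)/4, 1, 1, by omega⟩

end Aux

/-- for `x = t^4`, `y = t^6 + α t^7` with `Im α ≠ 0`, the real
value semigroup is generated by `4, 6, 13`. -/
theorem real_semigroup_example_three (α : ℂ) (hα : α.im ≠ 0) :
    {n : ℕ | ∃ f : MvPowerSeries (Fin 2) ℝ,
        substXY ((X : ℂ⟦X⟧) ^ 4) ((X : ℂ⟦X⟧) ^ 6 + PowerSeries.C α * (X : ℂ⟦X⟧) ^ 7) f ≠ 0 ∧
        (substXY ((X : ℂ⟦X⟧) ^ 4)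
          ((X : ℂ⟦X⟧) ^ 6 + PowerSeries.C α * (X : ℂ⟦X⟧) ^ 7) f).order = (n : ℕ∞)} =
      ↑(AddSubmonoid.closure ({4, 6, 13} : Set ℕ)) := by
  have hα0 : α ≠ 0 := fun h => hα (by simp [h])
  ext n
  simp only [Set.mem_setOf_eq, SetLike.mem_coe]
  constructor
  · rintro ⟨f, hf0, hford⟩
    obtain ⟨h1, h2⟩ := (order_eq_nat).mp hford
    have hrep : ∃ a b c : ℕ, n = 4*a+6*b+13*c := by
      apply rep_of_notgap <;> rintro rfl
      · exact h1 (coeff_gapzero α f 1 (by decide))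
      · exact h1 (coeff_gapzero α f 2 (by decide))
      · exact h1 (coeff_gapzero α f 3 (by decide))
      · exact h1 (coeff_gapzero α f 5 (by decide))
      · have h6 : cc f 0 1 = 0 := by have := h2 6 (by norm_num); rwa [coeff6] at this
        exact h1 (by rw [coeff7, h6, mul_zero])
      · exact h1 (coeff_gapzero α f 9 (by decide))
      · have h10 : cc f 1 1 = 0 := by have := h2 10 (by norm_num); rwa [coeff10] at this
        exact h1 (by rw [coeff11, h10, mul_zero])
      · have h13 : cc f 0 2 = 0 := by
          have := h2 13 (by norm_num); rw [coeff13] at this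
          rcases mul_eq_zero.mp this with h | h
          · rcases mul_eq_zero.mp h with h' | h'
            · norm_num at h'
            · exact absurd h' hα0
          · exact h
        have h14 : cc f 2 1 = 0 := by
          have := h2 14 (by norm_num); rwa [coeff14, h13, mul_zero, zero_add] at this
        exact h1 (by rw [coeff15, h14, mul_zero])
    obtain ⟨a, b, c, rfl⟩ := hrep
    have g4 : (4 : ℕ) ∈ AddSubmonoid.closure ({4, 6, 13} : Set ℕ) :=
      AddSubmonoid.subset_closure (by simp)
    have g6 : (6 : ℕ) ∈ AddSubmonoid.closure ({4, 6, 13} : Set ℕ) :=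
      AddSubmonoid.subset_closure (by simp)
    have g13 : (13 : ℕ) ∈ AddSubmonoid.closure ({4, 6, 13} : Set ℕ) :=
      AddSubmonoid.subset_closure (by simp)
    have m4 := AddSubmonoid.nsmul_mem _ g4 a
    have m6 := AddSubmonoid.nsmul_mem _ g6 b
    have m13 := AddSubmonoid.nsmul_mem _ g13 c
    simp only [smul_eq_mul] at m4 m6 m13
    have := AddSubmonoid.add_mem _ (AddSubmonoid.add_mem _ m4 m6) m13
    convert this using 2 <;> ring
  · intro hn
    have hrep : ∃ a b c : ℕ, n = 4*a+6*b+13*c := by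
      induction hn using AddSubmonoid.closure_induction with
      | mem x hx =>
        rcases hx with h | h | h
        · exact ⟨1, 0, 0, by omega⟩
        · exact ⟨0, 1, 0, by omega⟩
        · exact ⟨0, 0, 1, by simp at h; omega⟩
      | zero => exact ⟨0, 0, 0, by omega⟩
      | add x y hx hy ihx ihy =>
        obtain ⟨a, b, c, rfl⟩ := ihx
        obtain ⟨a', b', c', rfl⟩ := ihy
        exact ⟨a + a', b + b', c + c', by ring⟩
    obtain ⟨a, b, c, rfl⟩ := hrep
    exact exists_f α hα0 a b c
end

section
/- Let α ∈ ℂ with Im(α²) ≠ 0, set x(t) = t^4 and y(t) = α·t^6 + t^7 in ℂ⟦t⟧, and let S be the additive submonoid of ℤ_{≥0} generated by 4, 6 and 25. Then for every nonnegative integer a, the ℝ-dimension of the quotient J(a)/J(a+1) equals [a ∈ S] + [a ≥ 12 and a − 12 ∈ S]. -/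
open PowerSeries

namespace Example2

noncomputable def mon (i j : ℕ) : MvPowerSeries (Fin 2) ℝ :=
  MvPowerSeries.monomial (Finsupp.single 0 i + Finsupp.single 1 j) 1

lemma coeff_mon (p1 p2 i j : ℕ) :
    MvPowerSeries.coeff (Finsupp.single 0 p1 + Finsupp.single 1 p2) (mon i j)
      = if p1 = i ∧ p2 = j then 1 else 0 := by
  rw [mon, MvPowerSeries.coeff_monomial]
  congr 1
  simp only [eq_iff_iff]
  constructor
  · intro h
    constructor
    · have := DFunLike.congr_fun h (0 : Fin 2)
      simpa [Finsupp.single_apply] using this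
    · have := DFunLike.congr_fun h (1 : Fin 2)
      simpa [Finsupp.single_apply] using this
  · rintro ⟨rfl, rfl⟩; rfl

variable (α : ℂ)

/-- the substituted values of x and y -/
noncomputable def xs : ℂ⟦X⟧ := X ^ 4
noncomputable def ys : ℂ⟦X⟧ := PowerSeries.C α * X ^ 6 + X ^ 7

lemma xs_ys_pow (i j : ℕ) :
    xs ^ i * ys α ^ j = X ^ (4*i+6*j) * (PowerSeries.C α + X) ^ j := by
  rw [xs, ys]
  have : (PowerSeries.C α * X ^ 6 + X ^ 7) = X^6 * (PowerSeries.C α + X) := by ring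
  rw [this, mul_pow, ← pow_mul, ← pow_mul, ← mul_assoc, ← pow_add]

lemma coeff_X_pow_mul_eq_zero {u : ℂ⟦X⟧} {N n : ℕ} (h : n < N) :
    PowerSeries.coeff n (X ^ N * u) = 0 :=
  PowerSeries.X_pow_dvd_iff.mp (dvd_mul_right _ _) n h

lemma substXY_mon (i j : ℕ) :
    substXY (xs) (ys α) (mon i j) = X ^ (4*i+6*j) * (PowerSeries.C α + X) ^ j := by
  ext n
  rw [substXY, PowerSeries.coeff_mk]
  rw [Finset.sum_eq_single (i, j)]
  · simp [coeff_mon, xs_ys_pow]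
  · intro p hp hne
    have : ¬ (p.1 = i ∧ p.2 = j) := by
      intro h; exact hne (Prod.ext h.1 h.2)
    simp [coeff_mon, this]
  · intro h
    simp only [Finset.mem_product, Finset.mem_range, not_and_or, not_lt] at h
    have hn : 4*i+6*j > n := by omega
    simp [coeff_mon, xs_ys_pow, coeff_X_pow_mul_eq_zero hn]

end Example2
namespace Example2

/-- `substXY` as an `ℝ`-linear map. -/
noncomputable def substL (x y : ℂ⟦X⟧) : MvPowerSeries (Fin 2) ℝ →ₗ[ℝ] ℂ⟦X⟧ where
  toFun := substXY x y
  map_add' f g := by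
    ext n
    simp [substXY, map_add, add_mul, Finset.sum_add_distrib]
  map_smul' r f := by
    ext n
    simp [substXY, PowerSeries.coeff_smul, Finset.smul_sum, Complex.real_smul, mul_assoc]

/-- The finite index set of monomials of weighted degree at most 39. -/
def T : Finset (ℕ × ℕ) :=
  (Finset.range 10 ×ˢ Finset.range 7).filter fun p => 4*p.1+6*p.2 ≤ 39

lemma card_T : T.card = 40 := by decide

variable (α : ℂ)

/-- coefficient extraction map into `Fin 40 → ℂ`. -/
noncomputable def pi40 : ℂ⟦X⟧ →ₗ[ℝ] (Fin 40 → ℂ) where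
  toFun g := fun n => PowerSeries.coeff (n : ℕ) g
  map_add' f g := by ext n; simp
  map_smul' r f := by ext n; simp [PowerSeries.coeff_smul]

noncomputable def U : Submodule ℝ (Fin 40 → ℂ) :=
  Submodule.span ℝ ((T.image fun p => pi40 (substL (xs) (ys α) (mon p.1 p.2)) : Finset (Fin 40 → ℂ)) : Set (Fin 40 → ℂ))

lemma finrank_U_le : Module.finrank ℝ (U α) ≤ 40 := by
  refine le_trans (finrank_span_finset_le_card _) ?_
  exact le_trans (Finset.card_image_le) (le_of_eq card_T)

lemma pi40_substL_mem_U (f : MvPowerSeries (Fin 2) ℝ) :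
    pi40 (substL (xs) (ys α) f) ∈ U α := by
  have key : pi40 (substL (xs) (ys α) f)
      = ∑ p ∈ T, (MvPowerSeries.coeff (Finsupp.single 0 p.1 + Finsupp.single 1 p.2) f)
          • pi40 (substL (xs) (ys α) (mon p.1 p.2)) := by
    funext n
    have hn : (n : ℕ) ≤ 39 := by omega
    show PowerSeries.coeff (n:ℕ) (substXY (xs) (ys α) f) = _
    rw [substXY, PowerSeries.coeff_mk]
    have hterm : ∀ p : ℕ × ℕ,
        ((MvPowerSeries.coeff (Finsupp.single 0 p.1 + Finsupp.single 1 p.2) f : ℝ) : ℂ) *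
          PowerSeries.coeff (n:ℕ) (xs ^ p.1 * ys α ^ p.2)
        = ((MvPowerSeries.coeff (Finsupp.single 0 p.1 + Finsupp.single 1 p.2) f : ℝ) : ℂ) *
          PowerSeries.coeff (n:ℕ) (X ^ (4*p.1+6*p.2) * (PowerSeries.C α + X) ^ p.2) := by
      intro p; rw [xs_ys_pow]
    -- both sums equal the sum over the filtered set
    have h1 : ∑ p ∈ Finset.range ((n:ℕ)+1) ×ˢ Finset.range ((n:ℕ)+1),
        ((MvPowerSeries.coeff (Finsupp.single 0 p.1 + Finsupp.single 1 p.2) f : ℝ) : ℂ) *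
          PowerSeries.coeff (n:ℕ) (xs ^ p.1 * ys α ^ p.2)
        = ∑ p ∈ (Finset.range ((n:ℕ)+1) ×ˢ Finset.range ((n:ℕ)+1)).filter
            (fun p => 4*p.1+6*p.2 ≤ (n:ℕ)),
            ((MvPowerSeries.coeff (Finsupp.single 0 p.1 + Finsupp.single 1 p.2) f : ℝ) : ℂ) *
              PowerSeries.coeff (n:ℕ) (xs ^ p.1 * ys α ^ p.2) := by
      symm
      apply Finset.sum_filter_of_ne
      intro p hp hne
      by_contra hgt
      apply hne
      rw [xs_ys_pow]
      rw [coeff_X_pow_mul_eq_zero (by omega), mul_zero]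
    have h2 : ∑ p ∈ T, (MvPowerSeries.coeff (Finsupp.single 0 p.1 + Finsupp.single 1 p.2) f)
          • (pi40 (substL (xs) (ys α) (mon p.1 p.2)) n)
        = ∑ p ∈ T.filter (fun p => 4*p.1+6*p.2 ≤ (n:ℕ)),
            (MvPowerSeries.coeff (Finsupp.single 0 p.1 + Finsupp.single 1 p.2) f)
              • (pi40 (substL (xs) (ys α) (mon p.1 p.2)) n) := by
      symm
      apply Finset.sum_filter_of_ne
      intro p hp hne
      by_contra hgt
      apply hne
      show (_ : ℝ) • (PowerSeries.coeff (n:ℕ) (substXY (xs) (ys α) (mon p.1 p.2))) = 0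
      show (_ : ℝ) • (PowerSeries.coeff (n:ℕ) (substL (xs) (ys α) (mon p.1 p.2))) = 0
      rw [show substL (xs) (ys α) (mon p.1 p.2) = substXY (xs) (ys α) (mon p.1 p.2) from rfl,
        substXY_mon, coeff_X_pow_mul_eq_zero (by omega), smul_zero]
    have hsets : (Finset.range ((n:ℕ)+1) ×ˢ Finset.range ((n:ℕ)+1)).filter
            (fun p => 4*p.1+6*p.2 ≤ (n:ℕ)) = T.filter (fun p => 4*p.1+6*p.2 ≤ (n:ℕ)) := by
      ext p
      simp only [Finset.mem_filter, Finset.mem_product, Finset.mem_range, T]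
      omega
    rw [Finset.sum_apply]
    simp only [Pi.smul_apply]
    rw [h1, h2, hsets]
    apply Finset.sum_congr rfl
    intro p hp
    rw [hterm]
    show _ = (_ : ℝ) • (PowerSeries.coeff (n:ℕ) (substL (xs) (ys α) (mon p.1 p.2)))
    rw [show substL (xs) (ys α) (mon p.1 p.2) = substXY (xs) (ys α) (mon p.1 p.2) from rfl,
      substXY_mon, Complex.real_smul]
  rw [key]
  apply Submodule.sum_mem
  intro p hp
  apply Submodule.smul_mem
  apply Submodule.subset_span
  simp only [Finset.coe_image, Set.mem_image, Finset.mem_coe]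
  exact ⟨p, hp, rfl⟩

end Example2
namespace Example2

variable (α : ℂ)

/-- vectors whose coordinates below `a` vanish -/
noncomputable def K (a : ℕ) : Submodule ℝ (Fin 40 → ℂ) where
  carrier := {v | ∀ n : Fin 40, (n : ℕ) < a → v n = 0}
  zero_mem' := by intro n _; rfl
  add_mem' := by intro u v hu hv n hn; simp [hu n hn, hv n hn]
  smul_mem' := by intro c v hv n hn; simp [hv n hn]

lemma mem_K {a : ℕ} {v : Fin 40 → ℂ} : v ∈ K a ↔ ∀ n : Fin 40, (n : ℕ) < a → v n = 0 :=
  Iff.rfl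

lemma K_zero : K 0 = ⊤ := by
  ext v; simp [mem_K]

lemma K_forty : K 40 = ⊥ := by
  ext v
  simp only [mem_K, Submodule.mem_bot]
  constructor
  · intro h; funext n; exact h n n.isLt
  · rintro rfl n _; rfl

lemma K_antitone {a b : ℕ} (h : a ≤ b) : K b ≤ K a := by
  intro v hv n hn; exact hv n (lt_of_lt_of_le hn h)

/-- the graded piece at level `a < 40` -/
noncomputable def Wsub (a : ℕ) (ha : a < 40) : Submodule ℝ ℂ :=
  Submodule.map ((LinearMap.proj (⟨a, ha⟩ : Fin 40) : (Fin 40 → ℂ) →ₗ[ℝ] ℂ).comp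
    (U α ⊓ K a).subtype) ⊤

lemma step (a : ℕ) (ha : a < 40) :
    Module.finrank ℝ (U α ⊓ K a : Submodule ℝ (Fin 40 → ℂ))
      = Module.finrank ℝ (Wsub α a ha)
        + Module.finrank ℝ (U α ⊓ K (a+1) : Submodule ℝ (Fin 40 → ℂ)) := by
  set L := (LinearMap.proj (⟨a, ha⟩ : Fin 40) : (Fin 40 → ℂ) →ₗ[ℝ] ℂ).comp
    (U α ⊓ K a).subtype with hL
  have hrange : LinearMap.range L = Wsub α a ha := by
    rw [Wsub, ← LinearMap.range_eq_map]
  have hker : LinearMap.ker L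
      = Submodule.comap (U α ⊓ K a).subtype (U α ⊓ K (a+1)) := by
    ext v
    simp only [LinearMap.mem_ker, hL, LinearMap.comp_apply, LinearMap.proj_apply,
      Submodule.mem_comap, Submodule.mem_inf, Submodule.coe_subtype]
    have hv := v.2
    simp only [Submodule.mem_inf] at hv
    constructor
    · intro h
      refine ⟨hv.1, ?_⟩
      intro n hn
      rcases Nat.lt_succ_iff_lt_or_eq.mp hn with h' | h'
      · exact hv.2 n h'
      · have : n = (⟨a, ha⟩ : Fin 40) := by
          apply Fin.ext; exact h'
        rw [this]; exact h
    · intro h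
      exact h.2 ⟨a, ha⟩ (Nat.lt_succ_self a)
  have hle : U α ⊓ K (a+1) ≤ U α ⊓ K a :=
    inf_le_inf_left _ (K_antitone (Nat.le_succ a))
  have e := Submodule.comapSubtypeEquivOfLe hle
  have h1 := LinearMap.finrank_range_add_finrank_ker L
  rw [hrange, hker] at h1
  have h2 : Module.finrank ℝ (Submodule.comap (U α ⊓ K a).subtype (U α ⊓ K (a+1)))
      = Module.finrank ℝ (U α ⊓ K (a+1) : Submodule ℝ (Fin 40 → ℂ)) :=
    LinearEquiv.finrank_eq e
  omega

lemma telescope_aux (g w : ℕ → ℕ) (n : ℕ) (hstep : ∀ a < n, g a = w a + g (a+1)) :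
    g 0 = ∑ a ∈ Finset.range n, w a + g n := by
  induction n with
  | zero => simp
  | succ m ih =>
    rw [Finset.sum_range_succ]
    have := hstep m (Nat.lt_succ_self m)
    have ih' := ih (fun a ha => hstep a (Nat.lt_succ_of_lt ha))
    omega

end Example2
namespace Example2

variable (α : ℂ)

noncomputable def wdim (a : ℕ) : ℕ :=
  if ha : a < 40 then Module.finrank ℝ (Wsub α a ha) else 0

lemma sum_wdim_le : ∑ a ∈ Finset.range 40, wdim α a ≤ 40 := by
  have h := telescope_aux (fun a => Module.finrank ℝ (U α ⊓ K a : Submodule ℝ (Fin 40 → ℂ)))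
    (wdim α) 40 (fun a ha => by
      rw [wdim, dif_pos ha]; exact step α a ha)
  have h40 : Module.finrank ℝ (U α ⊓ K 40 : Submodule ℝ (Fin 40 → ℂ)) = 0 := by
    rw [K_forty, inf_bot_eq]; exact finrank_bot ℝ _
  have h0 : Module.finrank ℝ (U α ⊓ K 0 : Submodule ℝ (Fin 40 → ℂ))
      = Module.finrank ℝ (U α) := by
    rw [K_zero, inf_top_eq]
  have hU := finrank_U_le α
  have h' : Module.finrank ℝ (U α ⊓ K 0 : Submodule ℝ (Fin 40 → ℂ))
      = ∑ a ∈ Finset.range 40, wdim α a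
        + Module.finrank ℝ (U α ⊓ K 40 : Submodule ℝ (Fin 40 → ℂ)) := h
  omega

/-- the linear functional `f ↦ coeff_a (f(x(t),y(t)))` on `J(a)` -/
noncomputable def phi (a : ℕ) : (JXY (xs) (ys α) a) →ₗ[ℝ] ℂ :=
  ((PowerSeries.coeff a).restrictScalars ℝ).comp
    ((substL (xs) (ys α)).comp (JXY (xs) (ys α) a).subtype)

noncomputable def Wa (a : ℕ) : Submodule ℝ ℂ := LinearMap.range (phi α a)

lemma ker_phi (a : ℕ) :
    LinearMap.ker (phi α a)
      = Submodule.comap (JXY (xs) (ys α) a).subtype (JXY (xs) (ys α) (a+1)) := by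
  ext f
  have hf := f.2
  simp only [JXY, Submodule.mem_mk, AddSubmonoid.mem_mk, AddSubsemigroup.mem_mk,
    Set.mem_setOf_eq] at hf
  simp only [LinearMap.mem_ker, phi, LinearMap.comp_apply, Submodule.subtype_apply,
    LinearMap.coe_restrictScalars, Submodule.mem_comap]
  show PowerSeries.coeff a (substXY (xs) (ys α) f.1) = 0
      ↔ (f.1 : MvPowerSeries (Fin 2) ℝ) ∈ JXY (xs) (ys α) (a+1)
  have : ((f.1 : MvPowerSeries (Fin 2) ℝ) ∈ JXY (xs) (ys α) (a+1))
      ↔ ((a+1 : ℕ) : ℕ∞) ≤ nuXY (xs) (ys α) f.1 := Iff.rfl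
  rw [this, nuXY]
  constructor
  · intro h
    apply PowerSeries.le_order
    intro i hi
    have hi' : i < a + 1 := by exact_mod_cast hi
    rcases Nat.lt_succ_iff_lt_or_eq.mp hi' with h' | h'
    · exact PowerSeries.coeff_of_lt_order i (lt_of_lt_of_le (by exact_mod_cast h') hf)
    · rw [h']; exact h
  · intro h
    refine PowerSeries.coeff_of_lt_order a (lt_of_lt_of_le ?_ h)
    exact_mod_cast Nat.lt_succ_self a

noncomputable def quotEquiv (a : ℕ) : JQuot (xs) (ys α) a ≃ₗ[ℝ] Wa α a :=
  (Submodule.quotEquivOfEq _ _ (ker_phi α a).symm).trans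
    (LinearMap.quotKerEquivRange (phi α a))

lemma rank_JQuot_eq (a : ℕ) :
    Module.rank ℝ (JQuot (xs) (ys α) a) = (Module.finrank ℝ (Wa α a) : Cardinal) := by
  rw [(quotEquiv α a).rank_eq, Module.finrank_eq_rank]

lemma Wa_le_Wsub (a : ℕ) (ha : a < 40) : Wa α a ≤ Wsub α a ha := by
  rintro v ⟨f, rfl⟩
  have hf := f.2
  have horder : ((a : ℕ) : ℕ∞) ≤ (substXY (xs) (ys α) f.1).order := hf
  have hmemU : pi40 (substL (xs) (ys α) f.1) ∈ U α := pi40_substL_mem_U α f.1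
  have hmemK : pi40 (substL (xs) (ys α) f.1) ∈ K a := by
    intro n hn
    exact PowerSeries.coeff_of_lt_order _ (lt_of_lt_of_le (by exact_mod_cast hn) horder)
  exact Submodule.mem_map.mpr ⟨⟨_, ⟨hmemU, hmemK⟩⟩, trivial, rfl⟩

end Example2
namespace Example2

variable (α : ℂ)

lemma real_smul_eq (r : ℝ) (g : ℂ⟦X⟧) :
    r • g = PowerSeries.C (r : ℂ) * g := by
  ext n
  simp [PowerSeries.coeff_smul, Complex.real_smul, PowerSeries.coeff_C_mul]

lemma mem_Wa_of (f : MvPowerSeries (Fin 2) ℝ) (u : ℂ⟦X⟧) (a : ℕ)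
    (hsub : substXY (xs) (ys α) f = X ^ a * u) :
    PowerSeries.constantCoeff u ∈ Wa α a := by
  have hord : ((a : ℕ) : ℕ∞) ≤ (substXY (xs) (ys α) f).order := by
    apply PowerSeries.le_order
    intro i hi
    rw [hsub]
    exact coeff_X_pow_mul_eq_zero (by exact_mod_cast hi)
  refine ⟨⟨f, hord⟩, ?_⟩
  show PowerSeries.coeff a (substXY (xs) (ys α) f) = _
  rw [hsub]
  have := PowerSeries.coeff_X_pow_mul u a 0
  rw [zero_add] at this
  rw [this, PowerSeries.coeff_zero_eq_constantCoeff]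

lemma constA (i j : ℕ) : α ^ j ∈ Wa α (4*i+6*j) := by
  have := mem_Wa_of α (mon i j) ((PowerSeries.C α + X) ^ j) (4*i+6*j) (substXY_mon α i j)
  simpa using this

lemma bracket :
    (PowerSeries.C α + X)^4
      - PowerSeries.C ((2*(α^2).re : ℝ) : ℂ) * (PowerSeries.C α + X)^2
      + PowerSeries.C ((Complex.normSq α ^ 2 : ℝ) : ℂ)
    = X * ((PowerSeries.C (2*α) + X)
        * (PowerSeries.C (α^2 - (starRingEnd ℂ) (α^2))
            + PowerSeries.C (2*α) * X + X^2)) := by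
  have h1 : ((2*(α^2).re : ℝ) : ℂ) = α^2 + (starRingEnd ℂ) (α^2) := by
    rw [← Complex.add_conj]
  have h2 : ((Complex.normSq α ^ 2 : ℝ) : ℂ) = α^2 * (starRingEnd ℂ) (α^2) := by
    push_cast
    rw [map_pow, ← mul_pow, Complex.mul_conj]
  rw [h1, h2]
  simp only [map_add, map_mul, map_sub, map_pow, map_ofNat]
  ring

lemma constB (i j : ℕ) :
    (2*α * (α^2 - (starRingEnd ℂ) (α^2))) * α ^ j ∈ Wa α (25+(4*i+6*j)) := by
  set γ := (starRingEnd ℂ) (α^2) with hγ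
  set f : MvPowerSeries (Fin 2) ℝ :=
    mon i (j+4) - (2*(α^2).re) • mon (i+3) (j+2) + (Complex.normSq α ^ 2) • mon (i+6) j
    with hf
  have hsub : substXY (xs) (ys α) f
      = X ^ (25+(4*i+6*j)) * ((PowerSeries.C α + X) ^ j
          * ((PowerSeries.C (2*α) + X)
            * (PowerSeries.C (α^2 - γ) + PowerSeries.C (2*α) * X + X^2))) := by
    show substL (xs) (ys α) f = _
    rw [hf, map_add, map_sub, map_smul, map_smul]
    show substXY _ _ _ - (2*(α^2).re) • substXY _ _ _ + (Complex.normSq α ^ 2) • substXY _ _ _ = _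
    rw [substXY_mon, substXY_mon, substXY_mon, real_smul_eq, real_smul_eq]
    have e1 : 4*i+6*(j+4) = (4*i+6*j)+24 := by ring
    have e2 : 4*(i+3)+6*(j+2) = (4*i+6*j)+24 := by ring
    have e3 : 4*(i+6)+6*j = (4*i+6*j)+24 := by ring
    have e4 : 25+(4*i+6*j) = ((4*i+6*j)+24)+1 := by ring
    rw [e1, e2, e3, e4]
    have expand : (PowerSeries.C α + X) ^ (j+4)
        = (PowerSeries.C α + X) ^ j * (PowerSeries.C α + X) ^ 4 := pow_add _ _ _
    have expand2 : (PowerSeries.C α + X) ^ (j+2)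
        = (PowerSeries.C α + X) ^ j * (PowerSeries.C α + X) ^ 2 := pow_add _ _ _
    rw [expand, expand2]
    have key : X ^ ((4*i+6*j)+24) * ((PowerSeries.C α + X) ^ j
          * ((PowerSeries.C α + X)^4
            - PowerSeries.C ((2*(α^2).re : ℝ) : ℂ) * (PowerSeries.C α + X)^2
            + PowerSeries.C ((Complex.normSq α ^ 2 : ℝ) : ℂ)))
        = X ^ (((4*i+6*j)+24)+1) * ((PowerSeries.C α + X) ^ j
          * ((PowerSeries.C (2*α) + X)
            * (PowerSeries.C (α^2 - γ) + PowerSeries.C (2*α) * X + X^2))) := by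
      rw [bracket α, hγ]
      ring
    rw [← key]
    push_cast
    ring
  have := mem_Wa_of α f _ _ hsub
  have hc : PowerSeries.constantCoeff ((PowerSeries.C α + X) ^ j
          * ((PowerSeries.C (2*α) + X)
            * (PowerSeries.C (α^2 - γ) + PowerSeries.C (2*α) * X + X^2)))
      = α ^ j * (2*α * (α^2 - γ)) := by
    simp [map_mul, map_pow, map_add]
  rw [hc] at this
  have h' : (2*α*(α^2 - γ))*α^j = α^j*(2*α*(α^2 - γ)) := by ring
  rw [h']
  exact this

end Example2
namespace Example2

variable {α : ℂ}

lemma alpha_ne_zero (hα : (α ^ 2).im ≠ 0) : α ≠ 0 := by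
  rintro rfl; simp at hα

lemma diff_ne_zero (hα : (α ^ 2).im ≠ 0) : α^2 - (starRingEnd ℂ) (α^2) ≠ 0 := by
  intro h
  have : (starRingEnd ℂ) (α^2) = α^2 := by linear_combination -h
  exact hα (Complex.conj_eq_iff_im.mp this)

lemma one_le_finrank_W {W : Submodule ℝ ℂ} {z : ℂ} (hz : z ∈ W) (h0 : z ≠ 0) :
    1 ≤ Module.finrank ℝ W := by
  have h1 : Submodule.span ℝ {z} ≤ W := by
    rw [Submodule.span_le]; simpa using hz
  calc 1 = Module.finrank ℝ (Submodule.span ℝ {z}) := (finrank_span_singleton h0).symm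
  _ ≤ Module.finrank ℝ W := Submodule.finrank_mono h1

lemma two_le_finrank_W (hα : (α ^ 2).im ≠ 0) {W : Submodule ℝ ℂ} {z : ℂ}
    (h0 : z ≠ 0) (h1 : z ∈ W) (h2 : α^2 * z ∈ W) :
    2 ≤ Module.finrank ℝ W := by
  set v : Fin 2 → W := ![⟨z, h1⟩, ⟨α^2 * z, h2⟩] with hv
  have hli : LinearIndependent ℝ v := by
    apply LinearIndependent.of_comp W.subtype
    have : W.subtype ∘ v = ![z, α^2 * z] := by
      funext i; fin_cases i <;> rfl
    rw [this]
    rw [LinearIndependent.pair_iff]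
    intro s t hst
    have hfac : ((s : ℂ) + (t : ℂ) * α^2) * z = 0 := by
      rw [Complex.real_smul, Complex.real_smul] at hst
      linear_combination hst
    have hst0 : (s : ℂ) + (t : ℂ) * α^2 = 0 := by
      rcases mul_eq_zero.mp hfac with h | h
      · exact h
      · exact absurd h h0
    have him : t * (α^2).im = 0 := by
      have := congrArg Complex.im hst0
      simpa using this
    have ht : t = 0 := by
      rcases mul_eq_zero.mp him with h | h
      · exact h
      · exact absurd h hα
    have hs : s = 0 := by
      rw [ht] at hst0
      simpa using hst0
    exact ⟨hs, ht⟩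
  have := hli.fintype_card_le_finrank
  simpa using this

/-! ### arithmetic of the semigroup -/

def inS (n : ℕ) : Prop := ∃ k l m : ℕ, n = 4*k+6*l+25*m

lemma mem_S_iff {S : AddSubmonoid ℕ} (hS : S = AddSubmonoid.closure ({4, 6, 25} : Set ℕ))
    (n : ℕ) : n ∈ S ↔ inS n := by
  subst hS
  constructor
  · intro hn
    have : AddSubmonoid.closure ({4, 6, 25} : Set ℕ)
        ≤ { carrier := {n | inS n}
            zero_mem' := ⟨0, 0, 0, rfl⟩
            add_mem' := by
              rintro a b ⟨k, l, m, rfl⟩ ⟨k', l', m', rfl⟩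
              exact ⟨k+k', l+l', m+m', by ring⟩ } := by
      rw [AddSubmonoid.closure_le]
      rintro x hx
      simp only [Set.mem_insert_iff, Set.mem_singleton_iff] at hx
      rcases hx with rfl | rfl | rfl
      · exact ⟨1, 0, 0, by norm_num⟩
      · exact ⟨0, 1, 0, by norm_num⟩
      · exact ⟨0, 0, 1, by norm_num⟩
    exact this hn
  · rintro ⟨k, l, m, rfl⟩
    have h4 : (4 : ℕ) ∈ AddSubmonoid.closure ({4, 6, 25} : Set ℕ) :=
      AddSubmonoid.subset_closure (by norm_num)
    have h6 : (6 : ℕ) ∈ AddSubmonoid.closure ({4, 6, 25} : Set ℕ) :=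
      AddSubmonoid.subset_closure (by norm_num)
    have h25 : (25 : ℕ) ∈ AddSubmonoid.closure ({4, 6, 25} : Set ℕ) :=
      AddSubmonoid.subset_closure (by norm_num)
    have := AddSubmonoid.add_mem _ (AddSubmonoid.add_mem _
      (AddSubmonoid.nsmul_mem _ h4 k) (AddSubmonoid.nsmul_mem _ h6 l))
      (AddSubmonoid.nsmul_mem _ h25 m)
    simpa [nsmul_eq_mul, mul_comm] using this

/-- bounded, decidable version -/
def inSb (n : ℕ) : Prop := ∃ k < 10, ∃ l < 7, ∃ m < 2, n = 4*k+6*l+25*m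

instance : DecidablePred inSb := fun n => by unfold inSb; infer_instance

lemma inS_iff_inSb {n : ℕ} (hn : n ≤ 39) : inS n ↔ inSb n := by
  constructor
  · rintro ⟨k, l, m, rfl⟩
    exact ⟨k, by omega, l, by omega, m, by omega, rfl⟩
  · rintro ⟨k, _, l, _, m, _, rfl⟩
    exact ⟨k, l, m, rfl⟩

lemma inS_even_rep {n : ℕ} (h : inS n) (he : n % 2 = 0) : ∃ k l, n = 4*k+6*l := by
  obtain ⟨k, l, m, rfl⟩ := h
  exact ⟨k + 11*(m/2), l + m/2, by omega⟩

lemma inS_odd_rep {n : ℕ} (h : inS n) (he : n % 2 = 1) : ∃ k l, n = 25+(4*k+6*l) := by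
  obtain ⟨k, l, m, rfl⟩ := h
  have hm : m % 2 = 1 := by omega
  exact ⟨k + 11*((m-1)/2), l + (m-1)/2, by omega⟩

end Example2
namespace Example2

variable {α : ℂ}

open scoped Classical in
noncomputable def tnat (a : ℕ) : ℕ :=
  (if inS a then 1 else 0) + (if 12 ≤ a ∧ inS (a - 12) then 1 else 0)

lemma inS_add12 {a : ℕ} (h12 : 12 ≤ a) (h : inS (a-12)) : inS a := by
  obtain ⟨k, l, m, hr⟩ := h
  exact ⟨k+3, l, m, by omega⟩

lemma lower_bound (hα : (α ^ 2).im ≠ 0) (a : ℕ) :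
    tnat a ≤ Module.finrank ℝ (Wa α a) := by
  classical
  rw [tnat]
  by_cases h1 : inS a
  · by_cases h2 : 12 ≤ a ∧ inS (a - 12)
    · rw [if_pos h1, if_pos h2]
      by_cases he : a % 2 = 0
      · -- even, two monomials
        obtain ⟨k', l', hrep⟩ := inS_even_rep h2.2 (by omega)
        have hwit : ∃ i j i', a = 4*i+6*j ∧ a = 4*i'+6*(j+2) := by
          by_cases h4 : a % 4 = 0
          · exact ⟨a/4, 0, (a-12)/4, by omega, by omega⟩
          · exact ⟨(a-6)/4, 1, (a-18)/4, by omega, by omega⟩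
        obtain ⟨i, j, i', e1, e2⟩ := hwit
        have z1 : α ^ j ∈ Wa α a := by rw [e1]; exact constA α i j
        have z2 : α ^ 2 * α ^ j ∈ Wa α a := by
          rw [e2, show α^2 * α^j = α^(j+2) by ring]
          exact constA α i' (j+2)
        exact two_le_finrank_W hα (pow_ne_zero j (alpha_ne_zero hα)) z1 z2
      · -- odd, two F-elements
        obtain ⟨k, l, hrep1⟩ := inS_odd_rep h1 (by omega)
        obtain ⟨k', l', hrep2⟩ := inS_odd_rep h2.2 (by omega)
        have hwit : ∃ i j i', a = 25+(4*i+6*j) ∧ a = 25+(4*i'+6*(j+2)) := by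
          by_cases h4 : (a-25) % 4 = 0
          · exact ⟨(a-25)/4, 0, (a-37)/4, by omega, by omega⟩
          · exact ⟨(a-31)/4, 1, (a-43)/4, by omega, by omega⟩
        obtain ⟨i, j, i', e1, e2⟩ := hwit
        have z1 : (2*α * (α^2 - (starRingEnd ℂ) (α^2))) * α ^ j ∈ Wa α a := by
          rw [e1]; exact constB α i j
        have z2 : α^2 * ((2*α * (α^2 - (starRingEnd ℂ) (α^2))) * α ^ j) ∈ Wa α a := by
          rw [e2, show α^2 * ((2*α * (α^2 - (starRingEnd ℂ) (α^2))) * α ^ j)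
            = (2*α * (α^2 - (starRingEnd ℂ) (α^2))) * α ^ (j+2) by ring]
          exact constB α i' (j+2)
        have hz0 : (2*α * (α^2 - (starRingEnd ℂ) (α^2))) * α ^ j ≠ 0 := by
          apply mul_ne_zero
          · exact mul_ne_zero (mul_ne_zero two_ne_zero (alpha_ne_zero hα)) (diff_ne_zero hα)
          · exact pow_ne_zero j (alpha_ne_zero hα)
        exact two_le_finrank_W hα hz0 z1 z2
    · rw [if_pos h1, if_neg h2]
      by_cases he : a % 2 = 0
      · obtain ⟨k, l, e⟩ := inS_even_rep h1 he
        have z1 : α ^ l ∈ Wa α a := by rw [e]; exact constA α k l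
        simpa using one_le_finrank_W z1 (pow_ne_zero l (alpha_ne_zero hα))
      · obtain ⟨k, l, e⟩ := inS_odd_rep h1 (by omega)
        have z1 : (2*α * (α^2 - (starRingEnd ℂ) (α^2))) * α ^ l ∈ Wa α a := by
          rw [e]; exact constB α k l
        have hz0 : (2*α * (α^2 - (starRingEnd ℂ) (α^2))) * α ^ l ≠ 0 := by
          apply mul_ne_zero
          · exact mul_ne_zero (mul_ne_zero two_ne_zero (alpha_ne_zero hα)) (diff_ne_zero hα)
          · exact pow_ne_zero l (alpha_ne_zero hα)
        simpa using one_le_finrank_W z1 hz0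
  · have h2 : ¬ (12 ≤ a ∧ inS (a - 12)) := fun h => h1 (inS_add12 h.1 h.2)
    rw [if_neg h1, if_neg h2]
    simp

lemma inS_even_ge4 {n : ℕ} (he : n % 2 = 0) (h4 : 4 ≤ n) : inS n := by
  by_cases h : n % 4 = 0
  · exact ⟨n/4, 0, 0, by omega⟩
  · exact ⟨(n-6)/4, 1, 0, by omega⟩

lemma inS_odd_ge29 {n : ℕ} (he : n % 2 = 1) (h4 : 29 ≤ n) : inS n := by
  obtain ⟨k, l, m, hr⟩ := inS_even_ge4 (n := n - 25) (by omega) (by omega)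
  exact ⟨k, l, m+1, by omega⟩

lemma tnat_eq_two {a : ℕ} (ha : 40 ≤ a) : tnat a = 2 := by
  classical
  have h1 : inS a := by
    rcases Nat.mod_two_eq_zero_or_one a with h | h
    · exact inS_even_ge4 (by omega) (by omega)
    · exact inS_odd_ge29 (by omega) (by omega)
  have h2 : inS (a - 12) := by
    rcases Nat.mod_two_eq_zero_or_one a with h | h
    · exact inS_even_ge4 (by omega) (by omega)
    · exact inS_odd_ge29 (by omega) (by omega)
  rw [tnat, if_pos h1, if_pos ⟨by omega, h2⟩]

lemma finrank_Wa_le_two (a : ℕ) : Module.finrank ℝ (Wa α a) ≤ 2 := by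
  have := Submodule.finrank_le (Wa α a)
  rwa [Complex.finrank_real_complex] at this

/-- decidable version of tnat -/
def tdec (a : ℕ) : ℕ :=
  (if inSb a then 1 else 0) + (if 12 ≤ a ∧ inSb (a - 12) then 1 else 0)

lemma tnat_eq_tdec {a : ℕ} (ha : a ≤ 39) : tnat a = tdec a := by
  classical
  rw [tnat, tdec]
  congr 1
  · simp [inS_iff_inSb ha]
  · by_cases h12 : 12 ≤ a
    · simp [h12, inS_iff_inSb (show a - 12 ≤ 39 by omega)]
    · simp [h12]

lemma sum_tnat : ∑ a ∈ Finset.range 40, tnat a = 40 := by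
  have : ∀ a ∈ Finset.range 40, tnat a = tdec a := by
    intro a ha
    exact tnat_eq_tdec (by simp at ha; omega)
  rw [Finset.sum_congr rfl this]
  decide

lemma squeeze (hα : (α ^ 2).im ≠ 0) {a : ℕ} (ha : a < 40) :
    Module.finrank ℝ (Wa α a) = tnat a := by
  have hle : ∀ b ∈ Finset.range 40, Module.finrank ℝ (Wa α b) ≤ wdim α b := by
    intro b hb
    simp only [Finset.mem_range] at hb
    rw [wdim, dif_pos hb]
    exact Submodule.finrank_mono (Wa_le_Wsub α b hb)
  have hlow : ∀ b ∈ Finset.range 40, tnat b ≤ Module.finrank ℝ (Wa α b) :=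
    fun b _ => lower_bound hα b
  have hsum : ∑ b ∈ Finset.range 40, tnat b
      = ∑ b ∈ Finset.range 40, Module.finrank ℝ (Wa α b) := by
    apply le_antisymm (Finset.sum_le_sum hlow)
    calc ∑ b ∈ Finset.range 40, Module.finrank ℝ (Wa α b)
        ≤ ∑ b ∈ Finset.range 40, wdim α b := Finset.sum_le_sum hle
      _ ≤ 40 := sum_wdim_le α
      _ = ∑ b ∈ Finset.range 40, tnat b := sum_tnat.symm
  exact ((Finset.sum_eq_sum_iff_of_le hlow).mp hsum a (Finset.mem_range.mpr ha)).symm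

end Example2

open scoped Classical

/-- for `x = t^4`, `y = α t^6 + t^7` with `Im(α²) ≠ 0` and
`S = ⟨4, 6, 25⟩`, the dimension of `J(a)/J(a+1)` equals
`[a ∈ S] + [a ≥ 12 ∧ a − 12 ∈ S]`. -/
theorem rank_JQuot_example_two (α : ℂ) (hα : (α ^ 2).im ≠ 0)
    (x y : PowerSeries ℂ) (hxdef : x = (X : ℂ⟦X⟧) ^ 4)
    (hydef : y = PowerSeries.C α * (X : ℂ⟦X⟧) ^ 6 + X ^ 7)
    (S : AddSubmonoid ℕ) (hS : S = AddSubmonoid.closure ({4, 6, 25} : Set ℕ)) :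
    ∀ a : ℕ,
      Module.rank ℝ (JQuot x y a) =
        (((if a ∈ S then 1 else 0) + (if 12 ≤ a ∧ a - 12 ∈ S then 1 else 0) : ℕ) :
          Cardinal) := by
  intro a
  have key : Module.rank ℝ (JQuot x y a)
      = (Module.finrank ℝ (Example2.Wa α a) : Cardinal) := by
    subst hxdef; subst hydef
    exact Example2.rank_JQuot_eq α a
  rw [key]
  have hfr : Module.finrank ℝ (Example2.Wa α a) = Example2.tnat a := by
    by_cases ha : a < 40
    · exact Example2.squeeze hα ha
    · refine le_antisymm ?_ (Example2.lower_bound hα a)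
      rw [Example2.tnat_eq_two (by omega)]
      exact Example2.finrank_Wa_le_two a
  rw [hfr]
  have h1 : (if a ∈ S then 1 else 0 : ℕ) = (if Example2.inS a then 1 else 0) := by
    by_cases h : Example2.inS a
    · rw [if_pos h, if_pos ((Example2.mem_S_iff hS a).mpr h)]
    · rw [if_neg h, if_neg (fun hh => h ((Example2.mem_S_iff hS a).mp hh))]
  have h2 : (if 12 ≤ a ∧ a - 12 ∈ S then 1 else 0 : ℕ)
      = (if 12 ≤ a ∧ Example2.inS (a - 12) then 1 else 0) := by
    by_cases h : 12 ≤ a ∧ Example2.inS (a - 12)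
    · rw [if_pos h, if_pos ⟨h.1, (Example2.mem_S_iff hS (a-12)).mpr h.2⟩]
    · rw [if_neg h, if_neg (fun hh => h ⟨hh.1, (Example2.mem_S_iff hS (a-12)).mp hh.2⟩)]
  rw [h1, h2]
  rfl
end
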